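/- arXiv:1504.03222 — 2 statements merged into one kernel-verified Lean document; each statement's English description precedes it below -/
import Mathlib

section
/- Suppose the presentation ⟨X|R⟩ is extra-confluent. Let w = x_1⋯x_m (with x_1,…,x_m ∈ X) be the source of a critical branching of ⟨X|R⟩. Then the length-N subword x_{m−N}⋯x_{m−1} of w is not a normal form for ⟨X|R⟩. -/
open scoped TensorProduct
set_option linter.unusedSectionVars false

def altProd {A : Type*} [Monoid A] (t s : A) (k : ℕ) : A :=
  if Even k then (t * s) ^ (k / 2) else s * (t * s) ^ (k / 2)

namespace CC

variable (K : Type*) [Field K] (X : Type*) [Fintype X] [LinearOrder X]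

abbrev F : Type _ := MonoidAlgebra K (FreeMonoid X)

noncomputable def wd (w : FreeMonoid X) : F K X := MonoidAlgebra.of K (FreeMonoid X) w

def wlen (w : FreeMonoid X) : ℕ := (FreeMonoid.toList w).length

noncomputable instance : LinearOrder (FreeMonoid X) :=
  LinearOrder.lift' (fun w => FreeMonoid.toList w) (fun _ _ h => FreeMonoid.toList.injective h)

noncomputable def lm (f : F K X) : FreeMonoid X := WithBot.unbotD 1 (f.coeff.support.max)

/-- The homogeneous component `V^{⊗m} = KX^{(m)}` of `K⟨X⟩`:
elements supported on words of length `m`. -/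
noncomputable def degSub (m : ℕ) : Submodule K (F K X) where
  carrier := {f | ∀ w ∈ f.coeff.support, wlen X w = m}
  add_mem' := by
    intro a b ha hb w hw
    rcases Finset.mem_union.mp (Finsupp.support_add hw) with h | h
    · exact ha w h
    · exact hb w h
  zero_mem' := by intro w hw; simp at hw
  smul_mem' := by intro c f hf w hw; exact hf w (Finsupp.support_smul hw)

lemma mem_degSub {m : ℕ} {f : F K X} :
    f ∈ degSub K X m ↔ ∀ w ∈ f.coeff.support, wlen X w = m := Iff.rfl

/-- `l_N(2k) = kN`, `l_N(2k+1) = kN + 1`. -/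
def lN (N n : ℕ) : ℕ := if Even n then (n / 2) * N else (n / 2) * N + 1

/-- The homogeneous component `I(R)_m` of the two-sided ideal generated by `R`:
`I(R)_m = Σ_{i=0}^{m−N} V^{⊗i}·R̄·V^{⊗m−N−i}` for `m ≥ N` and `I(R)_m = 0` for `m < N`. -/
noncomputable def idealPiece (N : ℕ) (R : Set (F K X)) (m : ℕ) : Submodule K (F K X) :=
  if m < N then ⊥
  else ⨆ i ∈ Finset.range (m - N + 1),
    degSub K X i * Submodule.span K R * degSub K X (m - N - i)

/-- The two-sided ideal `I(R)` of `K⟨X⟩` generated by `R`, as a `K`-subspace. -/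
noncomputable def idealSpan (R : Set (F K X)) : Submodule K (F K X) :=
  Submodule.span K {x | ∃ u v : FreeMonoid X, ∃ g ∈ R, x = wd K X u * g * wd K X v}

/-- `J_0 = K`, `J_1 = V`, and `J_n = ⋂_{i=0}^{l_N(n)−N} V^{⊗i}·R̄·V^{⊗l_N(n)−N−i}` for `n ≥ 2`. -/
noncomputable def Jspace (N : ℕ) (R : Set (F K X)) : ℕ → Submodule K (F K X)
  | 0 => degSub K X 0
  | 1 => degSub K X 1
  | (n + 2) => ⨅ i ∈ Finset.range (lN N (n + 2) - N + 1),
      degSub K X i * Submodule.span K R * degSub K X (lN N (n + 2) - N - i)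

open Classical in
/-- The reduction `r_{u·g·v}` of the presentation `⟨X|R⟩`: the linear endomorphism of `K⟨X⟩`
fixing every word other than `u·lm(g)·v` and sending `u·lm(g)·v` to `u·(lm(g)−g)·v`. -/
noncomputable def redMap (u : FreeMonoid X) (g : F K X) (v : FreeMonoid X) :
    F K X →ₗ[K] F K X :=
  Finsupp.linearCombination K (fun w : FreeMonoid X =>
    if w = u * lm K X g * v then wd K X u * (wd K X (lm K X g) - g) * wd K X v
    else wd K X w) ∘ₗ (MonoidAlgebra.coeffLinearEquiv K).toLinearMap

/-- `f` is a normal form for `⟨X|R⟩` if it is fixed by every reduction. -/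
def IsNormalForm (R : Set (F K X)) (f : F K X) : Prop :=
  ∀ u v : FreeMonoid X, ∀ g ∈ R, redMap K X u g v f = f

/-- `g` is a normal form of `f`: `g` is a normal form and is obtained from `f` by applying a
finite sequence of reductions of `⟨X|R⟩`. -/
def NormalFormOf (R : Set (F K X)) (f g : F K X) : Prop :=
  IsNormalForm K X R g ∧
    ∃ L : List (FreeMonoid X × F K X × FreeMonoid X),
      (∀ p ∈ L, p.2.1 ∈ R) ∧
      g = L.foldr (fun p h => redMap K X p.1 p.2.1 p.2.2 h) f

/-- The presentation `⟨X|R⟩` is reduced: for every `f ∈ R`, `lm(f) − f` is a normal form for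
`⟨X|R⟩` and `lm(f)` is a normal form for `⟨X | R∖{f}⟩`. -/
def Reduced (R : Set (F K X)) : Prop :=
  ∀ f ∈ R, IsNormalForm K X R (wd K X (lm K X f) - f) ∧
    IsNormalForm K X (R \ {f}) (wd K X (lm K X f))

/-- `R` consists of `N`-homogeneous elements with leading coefficient `1`. -/
def NHomogLC1 (N : ℕ) (R : Set (F K X)) : Prop :=
  ∀ f ∈ R, f ∈ degSub K X N ∧ f.coeff (lm K X f) = 1

open Classical in
/-- The operator `S` of the presentation `⟨X|R⟩`: the endomorphism of `V^{⊗N}` sending `lm(f)`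
to `lm(f) − f` for every `f ∈ R` and fixing all other words (extended by the identity on words
of other lengths). -/
noncomputable def Sop (R : Set (F K X)) : F K X →ₗ[K] F K X :=
  Finsupp.linearCombination K (fun w : FreeMonoid X =>
    if h : ∃ f ∈ R, lm K X f = w then wd K X w - h.choose else wd K X w) ∘ₗ
      (MonoidAlgebra.coeffLinearEquiv K).toLinearMap

/-- `S ⊗ id_{V^{⊗b}}` realized on `K⟨X⟩`: on a word of length `a + b`, apply `S` to the first
`a` letters and the identity to the last `b` letters; the identity on all other words. -/
noncomputable def applyLeft (S : F K X →ₗ[K] F K X) (a b : ℕ) : F K X →ₗ[K] F K X :=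
  Finsupp.linearCombination K (fun w : FreeMonoid X =>
    if wlen X w = a + b then
      S (wd K X (FreeMonoid.ofList ((FreeMonoid.toList w).take a))) *
        wd K X (FreeMonoid.ofList ((FreeMonoid.toList w).drop a))
    else wd K X w) ∘ₗ (MonoidAlgebra.coeffLinearEquiv K).toLinearMap

/-- `id_{V^{⊗a}} ⊗ S` realized on `K⟨X⟩`: on a word of length `a + b`, apply the identity to
the first `a` letters and `S` to the last `b` letters; the identity on all other words. -/
noncomputable def applyRight (S : F K X →ₗ[K] F K X) (a b : ℕ) : F K X →ₗ[K] F K X :=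
  Finsupp.linearCombination K (fun w : FreeMonoid X =>
    if wlen X w = a + b then
      wd K X (FreeMonoid.ofList ((FreeMonoid.toList w).take a)) *
        S (wd K X (FreeMonoid.ofList ((FreeMonoid.toList w).drop a)))
    else wd K X w) ∘ₗ (MonoidAlgebra.coeffLinearEquiv K).toLinearMap

/-- The presentation `⟨X|R⟩` is side-confluent: for every `1 ≤ m ≤ N−1` there exists `k ≥ 1`
with `⟨id_{V^{⊗m}}⊗S, S⊗id_{V^{⊗m}}⟩^k = ⟨S⊗id_{V^{⊗m}}, id_{V^{⊗m}}⊗S⟩^k` on `V^{⊗N+m}`. -/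
def SideConfluent (N : ℕ) (R : Set (F K X)) : Prop :=
  ∀ m : ℕ, 1 ≤ m → m ≤ N - 1 →
    ∃ k : ℕ, 1 ≤ k ∧
      ∀ f ∈ degSub K X (N + m),
        altProd (applyRight K X (Sop K X R) m N) (applyLeft K X (Sop K X R) N m) k f =
          altProd (applyLeft K X (Sop K X R) N m) (applyRight K X (Sop K X R) m N) k f

/-- The extra-condition: `(V^{⊗n}⊗R̄) ∩ (R̄⊗V^{⊗n}) ⊆ V^{⊗n−1}⊗R̄⊗V` for every `2 ≤ n ≤ N−1`. -/
def ExtraCondition (N : ℕ) (R : Set (F K X)) : Prop :=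
  ∀ n : ℕ, 2 ≤ n → n ≤ N - 1 →
    (degSub K X n * Submodule.span K R) ⊓ (Submodule.span K R * degSub K X n) ≤
      degSub K X (n - 1) * Submodule.span K R * degSub K X 1

/-- A reduction operator relative to `X^{(m)}`, realized as a linear endomorphism of `K⟨X⟩`
extended by the identity outside of `V^{⊗m}`: an idempotent operator fixing each word of
length `m` or mapping it to an element of `V^{⊗m}` all of whose monomials are strictly
smaller. -/
structure IsRedOp (m : ℕ) (T : F K X →ₗ[K] F K X) : Prop where
  idem : T ∘ₗ T = T
  le : ∀ w : FreeMonoid X, wlen X w = m →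
    T (wd K X w) = wd K X w ∨
      (T (wd K X w) ∈ degSub K X m ∧ ∀ u ∈ (T (wd K X w)).coeff.support, u < w)
  other : ∀ w : FreeMonoid X, wlen X w ≠ m → T (wd K X w) = wd K X w

/-- The kernel `I(R)_{m−l_N(n)} ⊗ V^{⊗l_N(n)}` of the reduction operator `F_1^{n,m}`. -/
noncomputable def ker1 (N : ℕ) (R : Set (F K X)) (n m : ℕ) : Submodule K (F K X) :=
  idealPiece K X N R (m - lN N n) * degSub K X (lN N n)

/-- The kernel of the reduction operator `F_2^{n,m}`: `⊥` if `m < l_N(n+1)` (so that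
`F_2^{n,m} = id`), and `V^{⊗m−l_N(n+1)} ⊗ J_{n+1}` otherwise. -/
noncomputable def ker2 (N : ℕ) (R : Set (F K X)) (n m : ℕ) : Submodule K (F K X) :=
  if m < lN N (n + 1) then ⊥
  else degSub K X (m - lN N (n + 1)) * Jspace K X N R (n + 1)

/-- The span of the normal words of length `d`, i.e. `φ(V^{⊗d})` where `φ` is the
normal-form map. -/
noncomputable def nfSub (R : Set (F K X)) (d : ℕ) : Submodule K (F K X) :=
  Submodule.span K
    {x | ∃ w : FreeMonoid X, wlen X w = d ∧ IsNormalForm K X R (wd K X w) ∧ x = wd K X w}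

/-- `Γ = (id − T2)·Σ_{i odd, 1 ≤ i ≤ k−1} ⟨T2,T1⟩^i`, the image of the element `γ1` of the
confluence algebra under the `(T1,T2)`-representation. -/
noncomputable def Gamma (T1 T2 : F K X →ₗ[K] F K X) (k : ℕ) : F K X →ₗ[K] F K X :=
  (1 - T2) * ∑ i ∈ (Finset.Icc 1 (k - 1)).filter (fun i => Odd i), altProd T2 T1 i

end CC


namespace CC

section Aux

open scoped Pointwise

variable {K : Type*} [Field K] {X : Type*} [Fintype X] [LinearOrder X]

/-! ### Order lemmas -/

lemma le_iff_toList {u v : FreeMonoid X} :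
    u ≤ v ↔ FreeMonoid.toList u ≤ FreeMonoid.toList v := Iff.rfl

lemma lt_iff_toList {u v : FreeMonoid X} :
    u < v ↔ FreeMonoid.toList u < FreeMonoid.toList v := by
  rw [lt_iff_le_not_ge, lt_iff_le_not_ge]; exact Iff.rfl

lemma list_lt_lex {u v : List X} : u < v ↔ List.Lex (· < ·) u v := Iff.rfl

lemma lex_right {U V : List X} (Y : List X) (h : List.Lex (· < ·) U V) :
    U.length = V.length → List.Lex (· < ·) (U ++ Y) (V ++ Y) := by
  induction h with
  | nil => intro hl; simp at hl
  | cons _ ih => intro hl; exact List.Lex.cons (ih (by simpa using hl))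
  | rel hr => intro _; exact List.Lex.rel hr

lemma lex_left (A : List X) {U V : List X} (h : List.Lex (· < ·) U V) :
    List.Lex (· < ·) (A ++ U) (A ++ V) := by
  induction A with
  | nil => simpa
  | cons x xs ih => exact List.Lex.cons ih

lemma word_lt_right {u v : FreeMonoid X} (y : FreeMonoid X) (h : u < v)
    (hl : wlen X u = wlen X v) : u * y < v * y := by
  rw [lt_iff_toList, list_lt_lex] at h ⊢
  simp only [FreeMonoid.toList_mul]
  exact lex_right _ h hl

lemma word_le_right {u v : FreeMonoid X} (y : FreeMonoid X) (h : u ≤ v)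
    (hl : wlen X u = wlen X v) : u * y ≤ v * y := by
  rcases h.lt_or_eq with h' | rfl
  · exact (word_lt_right y h' hl).le
  · exact le_rfl

lemma word_lt_left {u v : FreeMonoid X} (a : FreeMonoid X) (h : u < v) : a * u < a * v := by
  rw [lt_iff_toList, list_lt_lex] at h ⊢
  simp only [FreeMonoid.toList_mul]
  exact lex_left _ h

lemma word_le_left {u v : FreeMonoid X} (a : FreeMonoid X) (h : u ≤ v) : a * u ≤ a * v := by
  rcases h.lt_or_eq with h' | rfl
  · exact (word_lt_left a h').le
  · exact le_rfl

lemma wlen_mul (u v : FreeMonoid X) : wlen X (u * v) = wlen X u + wlen X v := by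
  simp [wlen, FreeMonoid.toList_mul]

lemma word_le_3 {u v : FreeMonoid X} (a y : FreeMonoid X) (h : u ≤ v)
    (hl : wlen X u = wlen X v) : a * u * y ≤ a * v * y := by
  rw [mul_assoc, mul_assoc]
  exact word_le_left a (word_le_right y h hl)

lemma split_unique {a a' v v' y y' : FreeMonoid X} (ha : wlen X a = wlen X a')
    (hv : wlen X v = wlen X v') (h : a * v * y = a' * v' * y') :
    a = a' ∧ v = v' ∧ y = y' := by
  have h' : (FreeMonoid.toList a ++ FreeMonoid.toList v) ++ FreeMonoid.toList y
      = (FreeMonoid.toList a' ++ FreeMonoid.toList v') ++ FreeMonoid.toList y' := by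
    have := congrArg FreeMonoid.toList h
    simpa [FreeMonoid.toList_mul] using this
  have hlen : (FreeMonoid.toList a ++ FreeMonoid.toList v).length
      = (FreeMonoid.toList a' ++ FreeMonoid.toList v').length := by
    simp only [List.length_append]
    have ha' : (FreeMonoid.toList a).length = (FreeMonoid.toList a').length := ha
    have hv' : (FreeMonoid.toList v).length = (FreeMonoid.toList v').length := hv
    omega
  obtain ⟨h1, h2⟩ := List.append_inj h' hlen
  obtain ⟨h3, h4⟩ := List.append_inj h1 ha
  exact ⟨FreeMonoid.toList.injective h3, FreeMonoid.toList.injective h4,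
    FreeMonoid.toList.injective h2⟩

/-! ### lm lemmas -/

lemma lm_mem {f : F K X} (hf : f ≠ 0) : lm K X f ∈ f.coeff.support := by
  obtain ⟨u, hu⟩ := Finset.max_of_nonempty (Finsupp.support_nonempty_iff.mpr (mt MonoidAlgebra.coeff_eq_zero.mp hf))
  have : lm K X f = u := by rw [lm, hu]; rfl
  rw [this]
  exact Finset.mem_of_max hu

lemma le_lm {f : F K X} {u : FreeMonoid X} (hu : u ∈ f.coeff.support) : u ≤ lm K X f := by
  have hf : f ≠ 0 := by rintro rfl; simp at hu
  obtain ⟨v, hv⟩ := Finset.max_of_nonempty (Finsupp.support_nonempty_iff.mpr (mt MonoidAlgebra.coeff_eq_zero.mp hf))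
  have h1 : lm K X f = v := by rw [lm, hv]; rfl
  have := Finset.le_max hu
  rw [hv] at this
  rw [h1]
  exact_mod_cast this

lemma lm_eq {f : F K X} {u : FreeMonoid X} (h0 : f.coeff u ≠ 0)
    (hle : ∀ v ∈ f.coeff.support, v ≤ u) : lm K X f = u := by
  have hf : f ≠ 0 := by rintro rfl; simp at h0
  exact le_antisymm (hle _ (lm_mem hf)) (le_lm (Finsupp.mem_support_iff.mpr h0))

/-! ### wd lemmas -/

lemma wd_def (u : FreeMonoid X) : wd K X u = MonoidAlgebra.single u (1 : K) := rfl

lemma wd_apply_self (u : FreeMonoid X) : (wd K X u).coeff u = 1 := by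
  rw [wd_def]; exact Finsupp.single_eq_same

lemma support_wd (u : FreeMonoid X) : (wd K X u).coeff.support = {u} := by
  rw [wd_def]; exact Finsupp.support_single_ne_zero u one_ne_zero

lemma wd_mul (u v : FreeMonoid X) : wd K X (u * v) = wd K X u * wd K X v :=
  map_mul (MonoidAlgebra.of K (FreeMonoid X)) u v

lemma wd_one : wd K X (1 : FreeMonoid X) = 1 :=
  map_one (MonoidAlgebra.of K (FreeMonoid X))

lemma lc_wd (φ : FreeMonoid X → F K X) (u : FreeMonoid X) :
    (Finsupp.linearCombination K φ ∘ₗ (MonoidAlgebra.coeffLinearEquiv K).toLinearMap)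
      (wd K X u) = φ u := by
  rw [LinearMap.comp_apply]
  change Finsupp.linearCombination K φ (Finsupp.single u (1 : K)) = φ u
  rw [Finsupp.linearCombination_single, one_smul]

/-! ### support and product lemmas -/

lemma decomp (z : F K X) : z = ∑ u ∈ z.coeff.support, (z.coeff u) • wd K X u := by
  conv_lhs => rw [← MonoidAlgebra.sum_coeff_single z]
  rw [Finsupp.sum]
  refine Finset.sum_congr rfl fun u _ => ?_
  rw [wd_def, MonoidAlgebra.smul_single, smul_eq_mul, mul_one]

lemma map_mem_of_single {Q : FreeMonoid X → Prop} {P : Submodule K (F K X)}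
    (T : F K X →ₗ[K] F K X) (hT : ∀ u, Q u → T (wd K X u) ∈ P)
    {z : F K X} (hz : ∀ u ∈ z.coeff.support, Q u) : T z ∈ P := by
  rw [decomp z, map_sum]
  refine Submodule.sum_mem _ fun u hu => ?_
  rw [map_smul]
  exact Submodule.smul_mem _ _ (hT u (hz u hu))

lemma mem_support_mul {z₁ z₂ : F K X} {u : FreeMonoid X} (hu : u ∈ (z₁ * z₂).coeff.support) :
    ∃ a ∈ z₁.coeff.support, ∃ b ∈ z₂.coeff.support, u = a * b := by
  classical
  have := MonoidAlgebra.support_coeff_mul_subset z₁ z₂ hu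
  rw [Finset.mem_mul] at this
  obtain ⟨a, ha, b, hb, hab⟩ := this
  exact ⟨a, ha, b, hb, hab.symm⟩

lemma mem_support_wd_mul_wd {a y : FreeMonoid X} {z : F K X} {u : FreeMonoid X}
    (hu : u ∈ (wd K X a * z * wd K X y).coeff.support) : ∃ v ∈ z.coeff.support, u = a * v * y := by
  obtain ⟨b, hb, c, hc, rfl⟩ := mem_support_mul hu
  rw [support_wd, Finset.mem_singleton] at hc
  obtain ⟨d, hd, e, he, rfl⟩ := mem_support_mul hb
  rw [support_wd, Finset.mem_singleton] at hd
  exact ⟨e, he, by rw [hd, hc]⟩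

lemma wd_def' (u : FreeMonoid X) : wd K X u = MonoidAlgebra.single u (1 : K) := rfl

lemma wd_mul_wd_apply (a y : FreeMonoid X) (z : F K X) (v : FreeMonoid X) :
    (wd K X a * z * wd K X y).coeff (a * v * y) = z.coeff v := by
  rw [wd_def', wd_def']
  rw [MonoidAlgebra.coeff_mul_single_eq_coeff_mul _
    (fun b _ => mul_left_inj y (b := b) (c := a * v))]
  rw [MonoidAlgebra.coeff_single_mul_eq_mul_coeff _ (fun b _ => mul_right_inj a (b := b) (c := v))]
  rw [one_mul, mul_one]

/-! ### degSub lemmas -/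

lemma mul_mem_degSub {z₁ z₂ : F K X} {a b : ℕ} (h₁ : z₁ ∈ degSub K X a)
    (h₂ : z₂ ∈ degSub K X b) : z₁ * z₂ ∈ degSub K X (a + b) := by
  intro u hu
  obtain ⟨x, hx, y, hy, rfl⟩ := mem_support_mul hu
  rw [wlen_mul, h₁ x hx, h₂ y hy]

lemma wd_mem_degSub (u : FreeMonoid X) : wd K X u ∈ degSub K X (wlen X u) := by
  intro v hv
  rw [support_wd, Finset.mem_singleton] at hv
  rw [hv]

lemma degSub_le_span (d : ℕ) :
    degSub K X d ≤ Submodule.span K {x : F K X | ∃ u, wlen X u = d ∧ x = wd K X u} := by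
  intro z hz
  rw [decomp z]
  refine Submodule.sum_mem _ fun u hu => Submodule.smul_mem _ _ ?_
  exact Submodule.subset_span ⟨u, hz u hu, rfl⟩

/-! ### Sop lemmas -/

lemma Sop_wd_spec (R : Set (F K X)) (u : FreeMonoid X) :
    ∃ r, r ∈ Submodule.span K R ∧ Sop K X R (wd K X u) = wd K X u - r ∧
      (r = 0 ∨ (r ∈ R ∧ lm K X r = u)) ∧
      ((∃ f ∈ R, lm K X f = u) → (r ∈ R ∧ lm K X r = u)) := by
  classical
  have h0 : Sop K X R (wd K X u)
      = if h : ∃ f ∈ R, lm K X f = u then wd K X u - h.choose else wd K X u := by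
    rw [Sop]; exact lc_wd _ _
  by_cases h : ∃ f ∈ R, lm K X f = u
  · obtain ⟨hfR, hlm⟩ := h.choose_spec
    refine ⟨h.choose, Submodule.subset_span hfR, ?_, Or.inr ⟨hfR, hlm⟩, fun _ => ⟨hfR, hlm⟩⟩
    rw [h0, dif_pos h]
  · refine ⟨0, Submodule.zero_mem _, ?_, Or.inl rfl, fun hx => absurd hx h⟩
    rw [h0, dif_neg h, sub_zero]

/-! ### word splitting -/

lemma word_split (v : FreeMonoid X) (a : ℕ) :
    v = FreeMonoid.ofList ((FreeMonoid.toList v).take a)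
      * FreeMonoid.ofList ((FreeMonoid.toList v).drop a) := by
  apply FreeMonoid.toList.injective
  rw [FreeMonoid.toList_mul]
  exact (List.take_append_drop a (FreeMonoid.toList v)).symm

lemma wlen_ofList (l : List X) : wlen X (FreeMonoid.ofList l) = l.length := rfl

/-! ### Sop derived lemmas -/

variable {N : ℕ} {R : Set (F K X)}

lemma Sop_sub_mem (u : FreeMonoid X) :
    wd K X u - Sop K X R (wd K X u) ∈ Submodule.span K R := by
  obtain ⟨r, hr, heq, -, -⟩ := Sop_wd_spec R u
  rw [heq, sub_sub_cancel]
  exact hr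

lemma Sop_supp_le (hhom : NHomogLC1 K X N R) (u : FreeMonoid X) :
    ∀ v ∈ (Sop K X R (wd K X u)).coeff.support, wlen X v = wlen X u ∧ v ≤ u := by
  obtain ⟨r, -, heq, hcase, -⟩ := Sop_wd_spec R u
  intro v hv
  rcases hcase with rfl | ⟨hrR, hlm⟩
  · rw [heq, sub_zero, support_wd, Finset.mem_singleton] at hv
    exact ⟨by rw [hv], le_of_eq hv⟩
  · have hr0 : r ≠ 0 := by
      intro h
      have := (hhom r hrR).2
      rw [h] at this
      simp at this
  -- wlen u = N
    have hulen : wlen X u = N := by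
      rw [← hlm]
      exact (hhom r hrR).1 _ (lm_mem hr0)
    rw [heq, MonoidAlgebra.coeff_sub] at hv
    classical
    have := Finsupp.support_sub hv
    rw [Finset.mem_union, support_wd, Finset.mem_singleton] at this
    rcases this with rfl | hvr
    · exact ⟨rfl, le_rfl⟩
    · refine ⟨by rw [(hhom r hrR).1 _ hvr, hulen], ?_⟩
      rw [← hlm]
      exact le_lm hvr

lemma Sop_supp_lt (hhom : NHomogLC1 K X N R) (u : FreeMonoid X)
    (hex : ∃ f ∈ R, lm K X f = u) :
    ∀ v ∈ (Sop K X R (wd K X u)).coeff.support, wlen X v = wlen X u ∧ v < u := by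
  obtain ⟨r, -, heq, -, hpos⟩ := Sop_wd_spec R u
  obtain ⟨hrR, hlm⟩ := hpos hex
  intro v hv
  have hle := Sop_supp_le hhom u v hv
  refine ⟨hle.1, lt_of_le_of_ne hle.2 ?_⟩
  rintro rfl
  rw [heq, Finsupp.mem_support_iff, MonoidAlgebra.coeff_sub, Finsupp.sub_apply, wd_apply_self] at hv
  rw [← hlm] at hv
  rw [(hhom r hrR).2] at hv
  simp at hv

/-! ### applyLeft / applyRight on words -/

lemma applyLeft_wd (S : F K X →ₗ[K] F K X) (a b : ℕ) (v : FreeMonoid X)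
    (hv : wlen X v = a + b) :
    applyLeft K X S a b (wd K X v) =
      S (wd K X (FreeMonoid.ofList ((FreeMonoid.toList v).take a))) *
        wd K X (FreeMonoid.ofList ((FreeMonoid.toList v).drop a)) := by
  rw [applyLeft, lc_wd, if_pos hv]

lemma applyRight_wd (S : F K X →ₗ[K] F K X) (a b : ℕ) (v : FreeMonoid X)
    (hv : wlen X v = a + b) :
    applyRight K X S a b (wd K X v) =
      wd K X (FreeMonoid.ofList ((FreeMonoid.toList v).take a)) *
        S (wd K X (FreeMonoid.ofList ((FreeMonoid.toList v).drop a))) := by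
  rw [applyRight, lc_wd, if_pos hv]

/-! ### redMap on words, normal forms -/

lemma redMap_wd_pos (u : FreeMonoid X) (g : F K X) (v s' : FreeMonoid X)
    (h : s' = u * lm K X g * v) :
    redMap K X u g v (wd K X s') = wd K X u * (wd K X (lm K X g) - g) * wd K X v := by
  rw [redMap, lc_wd, if_pos h]

lemma R_ne_zero (hhom : NHomogLC1 K X N R) {r : F K X} (hr : r ∈ R) : r ≠ 0 := by
  intro h
  have := (hhom r hr).2
  rw [h] at this
  simp at this

lemma not_isNormalForm_lm (hhom : NHomogLC1 K X N R) {f₀ : F K X} (hf₀ : f₀ ∈ R) :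
    ¬ IsNormalForm K X R (wd K X (lm K X f₀)) := by
  intro hn
  have h1 := hn 1 1 f₀ hf₀
  rw [redMap_wd_pos 1 f₀ 1 (lm K X f₀) (by rw [one_mul, mul_one])] at h1
  rw [wd_one, one_mul, mul_one] at h1
  exact R_ne_zero hhom hf₀ (sub_eq_self.mp h1)

lemma lm_inj (hhom : NHomogLC1 K X N R) (hred : Reduced K X R) {f g : F K X}
    (hf : f ∈ R) (hg : g ∈ R) (h : lm K X f = lm K X g) : f = g := by
  by_contra hne
  have hgmem : g ∈ R \ {f} := ⟨hg, fun he => hne (Set.mem_singleton_iff.mp he).symm⟩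
  have h2 := (hred f hf).2 1 1 g hgmem
  rw [redMap_wd_pos 1 g 1 (lm K X f) (by rw [one_mul, mul_one, h])] at h2
  rw [wd_one, one_mul, mul_one, h] at h2
  exact R_ne_zero hhom hg (sub_eq_self.mp h2)

lemma span_le_degSubN (hhom : NHomogLC1 K X N R) :
    Submodule.span K R ≤ degSub K X N :=
  Submodule.span_le.mpr fun r hr => (hhom r hr).1

lemma lm_span (hhom : NHomogLC1 K X N R) (hred : Reduced K X R) {r : F K X}
    (hr : r ∈ Submodule.span K R) (hr0 : r ≠ 0) :
    ∃ f₀ ∈ R, lm K X f₀ = lm K X r := by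
  classical
  obtain ⟨c, hcs, hcsum⟩ := Submodule.mem_span_set.mp hr
  have hrs : r = ∑ f ∈ c.support, c f • f := by rw [← hcsum]; rfl
  have hne : c.support.Nonempty := by
    rw [Finsupp.support_nonempty_iff]
    rintro rfl
    rw [hrs] at hr0
    simp at hr0
  have hne' : (c.support.image (lm K X)).Nonempty := hne.image _
  set M₀ := (c.support.image (lm K X)).max' hne' with hM₀
  obtain ⟨f₀, hf₀s, hf₀lm⟩ := Finset.mem_image.mp ((c.support.image (lm K X)).max'_mem hne')
  have hf₀lm' : lm K X f₀ = M₀ := hf₀lm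
  have hf₀R : f₀ ∈ R := hcs hf₀s
  have hsupp : ∀ u ∈ r.coeff.support, u ≤ M₀ := by
    intro u hu
    rw [hrs, MonoidAlgebra.coeff_sum] at hu
    obtain ⟨f, hfmem, hu2⟩ := Finset.mem_biUnion.mp (Finsupp.support_finsetSum hu)
    have : u ∈ f.coeff.support := Finsupp.support_smul hu2
    exact le_trans (le_lm this) (Finset.le_max' _ _ (Finset.mem_image_of_mem _ hfmem))
  have hcoeff : r.coeff M₀ = c f₀ := by
    rw [hrs, MonoidAlgebra.coeff_sum, Finset.sum_apply']
    rw [Finset.sum_eq_single f₀]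
    · rw [MonoidAlgebra.coeff_smul_apply, ← hf₀lm', (hhom f₀ hf₀R).2, smul_eq_mul, mul_one]
    · intro f hfs hfne
      rw [MonoidAlgebra.coeff_smul_apply]
      have : f.coeff M₀ = 0 := by
        by_contra habs
        have h1 : M₀ ≤ lm K X f := le_lm (Finsupp.mem_support_iff.mpr habs)
        have h2 : lm K X f ≤ M₀ := Finset.le_max' _ _ (Finset.mem_image_of_mem _ hfs)
        exact hfne (lm_inj hhom hred (hcs hfs) hf₀R ((le_antisymm h2 h1).trans hf₀lm'.symm))
      rw [this, smul_zero]
    · intro h; exact absurd hf₀s h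
  have hc0 : c f₀ ≠ 0 := Finsupp.mem_support_iff.mp hf₀s
  exact ⟨f₀, hf₀R, hf₀lm'.trans (lm_eq (by rw [hcoeff]; exact hc0) hsupp).symm⟩

/-! ### the submodule of strictly lower elements -/

/-- Elements supported on words of length `m` strictly smaller than `w`. -/
noncomputable def lowSub (m : ℕ) (w : FreeMonoid X) : Submodule K (F K X) where
  carrier := {f | ∀ u ∈ f.coeff.support, wlen X u = m ∧ u < w}
  add_mem' := by
    intro a b ha hb u hu
    rcases Finset.mem_union.mp (Finsupp.support_add hu) with h | h
    · exact ha u h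
    · exact hb u h
  zero_mem' := by intro u hu; simp at hu
  smul_mem' := by intro c f hf u hu; exact hf u (Finsupp.support_smul hu)

lemma mem_lowSub {m : ℕ} {w : FreeMonoid X} {f : F K X} :
    f ∈ (lowSub m w : Submodule K (F K X)) ↔ ∀ u ∈ f.coeff.support, wlen X u = m ∧ u < w := Iff.rfl

lemma lowSub_apply_eq_zero {m : ℕ} {w : FreeMonoid X} {z : F K X}
    (hz : z ∈ (lowSub m w : Submodule K (F K X))) : z.coeff w = 0 := by
  by_contra h
  exact absurd (hz w (Finsupp.mem_support_iff.mpr h)).2 (lt_irrefl w)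

/-! ### operator facts for applyLeft/applyRight with Sop -/

section Ops

variable {p : ℕ}

lemma pre_len {v : FreeMonoid X} {a b : ℕ} (hv : wlen X v = a + b) :
    wlen X (FreeMonoid.ofList ((FreeMonoid.toList v).take a)) = a := by
  rw [wlen_ofList, List.length_take]
  have : (FreeMonoid.toList v).length = a + b := hv
  omega

lemma post_len {v : FreeMonoid X} {a b : ℕ} (hv : wlen X v = a + b) :
    wlen X (FreeMonoid.ofList ((FreeMonoid.toList v).drop a)) = b := by
  rw [wlen_ofList, List.length_drop]
  have : (FreeMonoid.toList v).length = a + b := hv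
  omega

lemma F1L : ∀ z ∈ degSub K X (N + p),
    z - applyLeft K X (Sop K X R) N p z ∈ Submodule.span K R * degSub K X p := by
  intro z hz
  have := map_mem_of_single (Q := fun u => wlen X u = N + p)
    (P := Submodule.span K R * degSub K X p)
    ((LinearMap.id : F K X →ₗ[K] F K X) - applyLeft K X (Sop K X R) N p) ?_ hz
  · simpa using this
  · intro v hv
    have hsplit := word_split v N
    rw [LinearMap.sub_apply, LinearMap.id_apply, applyLeft_wd _ _ _ _ hv,
      show wd K X v = wd K X (FreeMonoid.ofList ((FreeMonoid.toList v).take N)) *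
        wd K X (FreeMonoid.ofList ((FreeMonoid.toList v).drop N)) from by
          rw [← wd_mul, ← hsplit],
      ← sub_mul]
    have h2 := wd_mem_degSub (K := K)
      (FreeMonoid.ofList ((FreeMonoid.toList v).drop N))
    rw [post_len hv] at h2
    exact Submodule.mul_mem_mul (Sop_sub_mem _) h2

lemma F1R : ∀ z ∈ degSub K X (N + p),
    z - applyRight K X (Sop K X R) p N z ∈ degSub K X p * Submodule.span K R := by
  intro z hz
  have := map_mem_of_single (Q := fun u => wlen X u = N + p)
    (P := degSub K X p * Submodule.span K R)
    ((LinearMap.id : F K X →ₗ[K] F K X) - applyRight K X (Sop K X R) p N) ?_ hz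
  · simpa using this
  · intro v hv
    have hv' : wlen X v = p + N := by omega
    have hsplit := word_split v p
    rw [LinearMap.sub_apply, LinearMap.id_apply, applyRight_wd _ _ _ _ hv',
      show wd K X v = wd K X (FreeMonoid.ofList ((FreeMonoid.toList v).take p)) *
        wd K X (FreeMonoid.ofList ((FreeMonoid.toList v).drop p)) from by
          rw [← wd_mul, ← hsplit],
      ← mul_sub]
    have h2 := wd_mem_degSub (K := K)
      (FreeMonoid.ofList ((FreeMonoid.toList v).take p))
    rw [pre_len hv'] at h2
    exact Submodule.mul_mem_mul h2 (Sop_sub_mem _)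

lemma T1_wd_supp (hhom : NHomogLC1 K X N R) (v : FreeMonoid X) (hv : wlen X v = N + p) :
    ∀ u ∈ (applyLeft K X (Sop K X R) N p (wd K X v)).coeff.support,
      wlen X u = N + p ∧ u ≤ v := by
  rw [applyLeft_wd _ _ _ _ hv]
  intro u hu
  obtain ⟨x, hx, y, hy, rfl⟩ := mem_support_mul hu
  rw [support_wd, Finset.mem_singleton] at hy
  obtain ⟨hxlen, hxle⟩ := Sop_supp_le hhom _ x hx
  rw [pre_len hv] at hxlen
  subst hy
  constructor
  · rw [wlen_mul, hxlen, post_len hv]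
  · have := word_le_right (FreeMonoid.ofList ((FreeMonoid.toList v).drop N)) hxle
      (by rw [hxlen, pre_len hv])
    calc x * _ ≤ _ := this
    _ = v := (word_split v N).symm

lemma T2_wd_supp (hhom : NHomogLC1 K X N R) (v : FreeMonoid X) (hv : wlen X v = N + p) :
    ∀ u ∈ (applyRight K X (Sop K X R) p N (wd K X v)).coeff.support,
      wlen X u = N + p ∧ u ≤ v := by
  have hv' : wlen X v = p + N := by omega
  rw [applyRight_wd _ _ _ _ hv']
  intro u hu
  obtain ⟨x, hx, y, hy, rfl⟩ := mem_support_mul hu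
  rw [support_wd, Finset.mem_singleton] at hx
  obtain ⟨hylen, hyle⟩ := Sop_supp_le hhom _ y hy
  rw [post_len hv'] at hylen
  subst hx
  constructor
  · rw [wlen_mul, hylen, pre_len hv']; omega
  · have := word_le_left (FreeMonoid.ofList ((FreeMonoid.toList v).take p)) hyle
    calc _ * y ≤ _ := this
    _ = v := (word_split v p).symm

lemma F2L (hhom : NHomogLC1 K X N R) : ∀ z ∈ degSub K X (N + p),
    applyLeft K X (Sop K X R) N p z ∈ degSub K X (N + p) := by
  intro z hz
  refine map_mem_of_single (Q := fun u => wlen X u = N + p) _ ?_ hz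
  intro v hv u hu
  exact (T1_wd_supp hhom v hv u hu).1

lemma F2R (hhom : NHomogLC1 K X N R) : ∀ z ∈ degSub K X (N + p),
    applyRight K X (Sop K X R) p N z ∈ degSub K X (N + p) := by
  intro z hz
  refine map_mem_of_single (Q := fun u => wlen X u = N + p) _ ?_ hz
  intro v hv u hu
  exact (T2_wd_supp hhom v hv u hu).1

lemma F3L (hhom : NHomogLC1 K X N R) {w : FreeMonoid X} : ∀ z ∈ (lowSub (N + p) w : Submodule K (F K X)),
    applyLeft K X (Sop K X R) N p z ∈ (lowSub (N + p) w : Submodule K (F K X)) := by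
  intro z hz
  refine map_mem_of_single (Q := fun u => wlen X u = N + p ∧ u < w) _ ?_ hz
  intro v hv u hu
  exact ⟨(T1_wd_supp hhom v hv.1 u hu).1, lt_of_le_of_lt (T1_wd_supp hhom v hv.1 u hu).2 hv.2⟩

lemma F3R (hhom : NHomogLC1 K X N R) {w : FreeMonoid X} : ∀ z ∈ (lowSub (N + p) w : Submodule K (F K X)),
    applyRight K X (Sop K X R) p N z ∈ (lowSub (N + p) w : Submodule K (F K X)) := by
  intro z hz
  refine map_mem_of_single (Q := fun u => wlen X u = N + p ∧ u < w) _ ?_ hz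
  intro v hv u hu
  exact ⟨(T2_wd_supp hhom v hv.1 u hu).1, lt_of_le_of_lt (T2_wd_supp hhom v hv.1 u hu).2 hv.2⟩

lemma F4L (hhom : NHomogLC1 K X N R) {w : FreeMonoid X} (hw : wlen X w = N + p)
    (hex : ∃ f ∈ R, lm K X f = FreeMonoid.ofList ((FreeMonoid.toList w).take N)) :
    applyLeft K X (Sop K X R) N p (wd K X w) ∈ (lowSub (N + p) w : Submodule K (F K X)) := by
  intro u hu
  rw [applyLeft_wd _ _ _ _ hw] at hu
  obtain ⟨x, hx, y, hy, rfl⟩ := mem_support_mul hu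
  rw [support_wd, Finset.mem_singleton] at hy
  obtain ⟨hxlen, hxlt⟩ := Sop_supp_lt hhom _ hex x hx
  rw [pre_len hw] at hxlen
  subst hy
  constructor
  · rw [wlen_mul, hxlen, post_len hw]
  · have := word_lt_right (FreeMonoid.ofList ((FreeMonoid.toList w).drop N)) hxlt
      (by rw [hxlen, pre_len hw])
    calc x * _ < _ := this
    _ = w := (word_split w N).symm

lemma F4R (hhom : NHomogLC1 K X N R) {w : FreeMonoid X} (hw : wlen X w = N + p)
    (hex : ∃ f ∈ R, lm K X f = FreeMonoid.ofList ((FreeMonoid.toList w).drop p)) :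
    applyRight K X (Sop K X R) p N (wd K X w) ∈ (lowSub (N + p) w : Submodule K (F K X)) := by
  have hw' : wlen X w = p + N := by omega
  intro u hu
  rw [applyRight_wd _ _ _ _ hw'] at hu
  obtain ⟨x, hx, y, hy, rfl⟩ := mem_support_mul hu
  rw [support_wd, Finset.mem_singleton] at hx
  obtain ⟨hylen, hylt⟩ := Sop_supp_lt hhom _ hex y hy
  rw [post_len hw'] at hylen
  subst hx
  constructor
  · rw [wlen_mul, hylen, pre_len hw']; omega
  · have := word_lt_left (FreeMonoid.ofList ((FreeMonoid.toList w).take p)) hylt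
    calc _ * y < _ := this
    _ = w := (word_split w p).symm

end Ops

/-! ### altProd recurrence -/

lemma altProd_succ {A : Type*} [Monoid A] (t s : A) (i : ℕ) :
    altProd t s (i + 1) = (if Even i then s else t) * altProd t s i := by
  rcases Nat.even_or_odd i with h | h
  · obtain ⟨j, rfl⟩ := h
    have h1 : ¬ Even (j + j + 1) := by simp [Nat.even_add_one, Nat.even_add]
    have h2 : Even (j + j) := ⟨j, rfl⟩
    rw [altProd, altProd, if_neg h1, if_pos h2, if_pos h2]
    congr 2
    omega
  · obtain ⟨j, rfl⟩ := h
    have h1 : Even (2 * j + 1 + 1) := by refine ⟨j + 1, by omega⟩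
    have h2 : ¬ Even (2 * j + 1) := by simp [Nat.even_add_one, parity_simps]
    rw [altProd, altProd, if_pos h1, if_neg h2, if_neg h2]
    have e1 : (2 * j + 1 + 1) / 2 = j + 1 := by omega
    have e2 : (2 * j + 1) / 2 = j := by omega
    rw [e1, e2, pow_succ', mul_assoc]

/-! ### Step C: extracting a relation from membership in `V^{⊗d}·R̄·V` -/

lemma stepC (hhom : NHomogLC1 K X N R) (hred : Reduced K X R) {d : ℕ} {h : F K X}
    {w : FreeMonoid X} (hwlen : wlen X w = d + N + 1)
    (hmem : h ∈ degSub K X d * Submodule.span K R * degSub K X 1)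
    (hw0 : h.coeff w ≠ 0) (hsupp : ∀ u ∈ h.coeff.support, u ≤ w) :
    ∃ f₀ ∈ R, lm K X f₀ = FreeMonoid.ofList (((FreeMonoid.toList w).drop d).take N) := by
  classical
  set S₀ : Set (F K X) :=
    {x | ∃ a r y, wlen X a = d ∧ r ∈ R ∧ wlen X y = 1 ∧ x = wd K X a * r * wd K X y} with hS₀
  have hspan : h ∈ Submodule.span K S₀ := by
    have hle : degSub K X d * Submodule.span K R * degSub K X 1 ≤ Submodule.span K S₀ := by
      calc degSub K X d * Submodule.span K R * degSub K X 1
          ≤ Submodule.span K {x : F K X | ∃ u, wlen X u = d ∧ x = wd K X u} *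
              Submodule.span K R *
              Submodule.span K {x : F K X | ∃ u, wlen X u = 1 ∧ x = wd K X u} :=
            mul_le_mul' (mul_le_mul' (degSub_le_span d) le_rfl)
              (degSub_le_span 1)
        _ = Submodule.span K (({x : F K X | ∃ u, wlen X u = d ∧ x = wd K X u} * R) *
              {x : F K X | ∃ u, wlen X u = 1 ∧ x = wd K X u}) := by
            rw [Submodule.span_mul_span, Submodule.span_mul_span]
        _ ≤ Submodule.span K S₀ := by
            refine Submodule.span_mono ?_
            intro z hz
            rw [Set.mem_mul] at hz
            obtain ⟨x, hx, y, hy, rfl⟩ := hz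
            rw [Set.mem_mul] at hx
            obtain ⟨x1, hx1, r, hr, rfl⟩ := hx
            obtain ⟨a, ha, rfl⟩ := hx1
            obtain ⟨yy, hyy, rfl⟩ := hy
            exact ⟨a, r, yy, ha, hr, hyy, rfl⟩
    exact hle hmem
  have key : ∃ ρ : (FreeMonoid X × FreeMonoid X) →₀ (F K X),
      (∀ q, ρ q ∈ Submodule.span K R) ∧
      (∀ q ∈ ρ.support, wlen X q.1 = d ∧ wlen X q.2 = 1) ∧
      h = ∑ q ∈ ρ.support, wd K X q.1 * ρ q * wd K X q.2 := by
    clear hw0 hsupp hwlen hmem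
    induction hspan using Submodule.span_induction with
    | mem x hx =>
      obtain ⟨a, r, y, ha, hr, hy, rfl⟩ := hx
      by_cases hr0 : r = 0
      · exact ⟨0, by simp, by simp, by simp [hr0]⟩
      · refine ⟨Finsupp.single (a, y) r, ?_, ?_, ?_⟩
        · intro q
          rcases eq_or_ne q (a, y) with rfl | hq
          · rw [Finsupp.single_eq_same]; exact Submodule.subset_span hr
          · rw [Finsupp.single_eq_of_ne hq]; exact Submodule.zero_mem _
        · intro q hq
          rw [Finsupp.support_single_ne_zero _ hr0, Finset.mem_singleton] at hq
          subst hq; exact ⟨ha, hy⟩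
        · rw [Finsupp.support_single_ne_zero _ hr0, Finset.sum_singleton,
            Finsupp.single_eq_same]
    | zero => exact ⟨0, by simp, by simp, by simp⟩
    | add x y hx hy ihx ihy =>
      obtain ⟨ρ1, h1a, h1b, h1c⟩ := ihx
      obtain ⟨ρ2, h2a, h2b, h2c⟩ := ihy
      refine ⟨ρ1 + ρ2, fun q => by
        rw [Finsupp.add_apply]; exact Submodule.add_mem _ (h1a q) (h2a q), ?_, ?_⟩
      · intro q hq
        rcases Finset.mem_union.mp (Finsupp.support_add hq) with hh | hh
        exacts [h1b q hh, h2b q hh]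
      · have e1 : ∀ (ρ : (FreeMonoid X × FreeMonoid X) →₀ (F K X)),
            ∑ q ∈ ρ.support, wd K X q.1 * ρ q * wd K X q.2
              = ρ.sum (fun q r => wd K X q.1 * r * wd K X q.2) := fun ρ => rfl
        rw [h1c, h2c, e1, e1, e1, Finsupp.sum_add_index']
        · intro q; rw [mul_zero, zero_mul]
        · intro q b1 b2; rw [mul_add, add_mul]
    | smul c x hx ihx =>
      obtain ⟨ρ, h1, h2, h3⟩ := ihx
      by_cases hc : c = 0
      · exact ⟨0, by simp, by simp, by simp [hc]⟩
      · refine ⟨c • ρ, fun q => ?_, ?_, ?_⟩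
        · rw [Finsupp.smul_apply]; exact Submodule.smul_mem _ _ (h1 q)
        · intro q hq; exact h2 q (Finsupp.support_smul hq)
        · rw [Finsupp.support_smul_eq hc, h3, Finset.smul_sum]
          refine Finset.sum_congr rfl fun q hq => ?_
          rw [Finsupp.smul_apply, mul_smul_comm, smul_mul_assoc]
  obtain ⟨ρ, hρspan, hρlen, hρsum⟩ := key
  have hρne : ρ.support.Nonempty := by
    rw [Finsupp.support_nonempty_iff]
    rintro rfl
    rw [hρsum] at hw0
    simp at hw0
  have hlmlen : ∀ q ∈ ρ.support, wlen X (lm K X (ρ q)) = N := by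
    intro q hq
    have h0 : ρ q ≠ 0 := Finsupp.mem_support_iff.mp hq
    exact span_le_degSubN hhom (hρspan q) _ (lm_mem h0)
  have hne' : (ρ.support.image (fun q => q.1 * lm K X (ρ q) * q.2)).Nonempty := hρne.image _
  set M := (ρ.support.image (fun q => q.1 * lm K X (ρ q) * q.2)).max' hne' with hMdef
  obtain ⟨q₀, hq₀s, hq₀M⟩ := Finset.mem_image.mp
    ((ρ.support.image (fun q => q.1 * lm K X (ρ q) * q.2)).max'_mem hne')
  have hq₀M' : q₀.1 * lm K X (ρ q₀) * q₀.2 = M := hq₀M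
  have hsuppM : ∀ u ∈ h.coeff.support, u ≤ M := by
    intro u hu
    rw [hρsum, MonoidAlgebra.coeff_sum] at hu
    obtain ⟨q, hqs, hu2⟩ := Finset.mem_biUnion.mp (Finsupp.support_finsetSum hu)
    obtain ⟨v, hv, rfl⟩ := mem_support_wd_mul_wd hu2
    have hvle : v ≤ lm K X (ρ q) := le_lm hv
    have hvlen : wlen X v = N := span_le_degSubN hhom (hρspan q) _ hv
    refine le_trans (word_le_3 q.1 q.2 hvle (by rw [hvlen, hlmlen q hqs])) ?_
    rw [hMdef]
    exact Finset.le_max' (ρ.support.image (fun q => q.1 * lm K X (ρ q) * q.2)) _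
      (Finset.mem_image_of_mem _ hqs)
  have hwM : w ≤ M := hsuppM w (Finsupp.mem_support_iff.mpr hw0)
  have hMcoeff : h.coeff M = (ρ q₀).coeff (lm K X (ρ q₀)) := by
    rw [hρsum, MonoidAlgebra.coeff_sum, Finset.sum_apply']
    rw [Finset.sum_eq_single q₀]
    · rw [← hq₀M']
      exact wd_mul_wd_apply _ _ _ _
    · intro q hqs hqne
      by_contra habs
      have hM2 : M ∈ (wd K X q.1 * ρ q * wd K X q.2).coeff.support :=
        Finsupp.mem_support_iff.mpr habs
      obtain ⟨v, hv, hMv⟩ := mem_support_wd_mul_wd hM2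
      have hvlen : wlen X v = N := span_le_degSubN hhom (hρspan q) _ hv
      have hsp := split_unique (a := q.1) (v := v) (y := q.2)
        (a' := q₀.1) (v' := lm K X (ρ q₀)) (y' := q₀.2)
        (by rw [(hρlen q hqs).1, (hρlen q₀ hq₀s).1])
        (by rw [hvlen, hlmlen q₀ hq₀s])
        (by rw [← hMv, hq₀M'])
      exact hqne (Prod.ext hsp.1 hsp.2.2)
    · intro habs; exact absurd hq₀s habs
  have hq₀0 : ρ q₀ ≠ 0 := Finsupp.mem_support_iff.mp hq₀s
  have hMne : h.coeff M ≠ 0 := by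
    rw [hMcoeff]; exact Finsupp.mem_support_iff.mp (lm_mem hq₀0)
  have hMw : M = w := le_antisymm (hsupp M (Finsupp.mem_support_iff.mpr hMne)) hwM
  set a₀ := FreeMonoid.ofList ((FreeMonoid.toList w).take d) with ha₀
  set s₀ := FreeMonoid.ofList (((FreeMonoid.toList w).drop d).take N) with hs₀
  set y₀ := FreeMonoid.ofList ((FreeMonoid.toList w).drop (d + N)) with hy₀
  have hwsplit : w = a₀ * s₀ * y₀ := by
    rw [ha₀, hs₀, hy₀]
    apply FreeMonoid.toList.injective
    simp only [FreeMonoid.toList_mul, FreeMonoid.toList_ofList]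
    rw [List.append_assoc, ← List.drop_drop, List.take_append_drop, List.take_append_drop]
  have hwl : (FreeMonoid.toList w).length = d + N + 1 := hwlen
  have ha₀len : wlen X a₀ = d := by rw [ha₀, wlen_ofList, List.length_take]; omega
  have hs₀len : wlen X s₀ = N := by
    rw [hs₀, wlen_ofList, List.length_take, List.length_drop]; omega
  have hsp := split_unique (a := q₀.1) (v := lm K X (ρ q₀)) (y := q₀.2)
    (a' := a₀) (v' := s₀) (y' := y₀)
    (by rw [(hρlen q₀ hq₀s).1, ha₀len])
    (by rw [hlmlen q₀ hq₀s, hs₀len])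
    (by rw [hq₀M', hMw, hwsplit])
  obtain ⟨f₀, hf₀R, hf₀lm⟩ := lm_span hhom hred (hρspan q₀) hq₀0
  exact ⟨f₀, hf₀R, hf₀lm.trans hsp.2.1⟩

/-! ### Step A: producing an element of the intersection -/

lemma one_le_wlen {u : FreeMonoid X} (hu : u ≠ 1) : 1 ≤ wlen X u := by
  rcases Nat.eq_zero_or_pos (wlen X u) with h | h
  · exfalso
    apply hu
    apply FreeMonoid.toList.injective
    rw [FreeMonoid.toList_one]
    exact List.length_eq_zero_iff.mp h
  · exact h

lemma stepA (hhom : NHomogLC1 K X N R) {p : ℕ} {w : FreeMonoid X}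
    (hw : wlen X w = N + p)
    (hexL : ∃ f ∈ R, lm K X f = FreeMonoid.ofList ((FreeMonoid.toList w).take N))
    (hexR : ∃ f ∈ R, lm K X f = FreeMonoid.ofList ((FreeMonoid.toList w).drop p))
    {k : ℕ} (hk1 : 1 ≤ k)
    (hkeq : altProd (applyRight K X (Sop K X R) p N) (applyLeft K X (Sop K X R) N p) k
        (wd K X w)
      = altProd (applyLeft K X (Sop K X R) N p) (applyRight K X (Sop K X R) p N) k
        (wd K X w)) :
    ∃ h : F K X, h ∈ degSub K X p * Submodule.span K R
      ∧ h ∈ Submodule.span K R * degSub K X p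
      ∧ h.coeff w ≠ 0 ∧ (∀ u ∈ h.coeff.support, u ≤ w) := by
  classical
  set T1 := applyLeft K X (Sop K X R) N p with hT1
  set T2 := applyRight K X (Sop K X R) p N with hT2
  have hesucc : ∀ i, altProd T2 T1 (i+1) (wd K X w)
      = (if Even i then T1 else T2) (altProd T2 T1 i (wd K X w)) := fun i => by
    rw [altProd_succ, Module.End.mul_apply]
  have he'succ : ∀ i, altProd T1 T2 (i+1) (wd K X w)
      = (if Even i then T2 else T1) (altProd T1 T2 i (wd K X w)) := fun i => by
    rw [altProd_succ, Module.End.mul_apply]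
  have he0 : altProd T2 T1 0 (wd K X w) = wd K X w := by
    simp [altProd]
  have he'0 : altProd T1 T2 0 (wd K X w) = wd K X w := by
    simp [altProd]
  have hwdeg : wd K X w ∈ degSub K X (N + p) := by
    have := wd_mem_degSub (K := K) w
    rwa [hw] at this
  have hdeg : ∀ i, altProd T2 T1 i (wd K X w) ∈ degSub K X (N + p) := by
    intro i
    induction i with
    | zero => rw [he0]; exact hwdeg
    | succ i ih =>
      rw [hesucc]
      split_ifs
      · exact F2L hhom _ ih
      · exact F2R hhom _ ih
  have hdeg' : ∀ i, altProd T1 T2 i (wd K X w) ∈ degSub K X (N + p) := by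
    intro i
    induction i with
    | zero => rw [he'0]; exact hwdeg
    | succ i ih =>
      rw [he'succ]
      split_ifs
      · exact F2R hhom _ ih
      · exact F2L hhom _ ih
  have hT1w : T1 (wd K X w) ∈ (lowSub (N + p) w : Submodule K (F K X)) := F4L hhom hw hexL
  have hT2w : T2 (wd K X w) ∈ (lowSub (N + p) w : Submodule K (F K X)) := F4R hhom hw hexR
  have hlow : ∀ i, 1 ≤ i →
      altProd T2 T1 i (wd K X w) ∈ (lowSub (N + p) w : Submodule K (F K X)) := by
    intro i hi
    induction i with
    | zero => omega
    | succ i ih =>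
      rcases Nat.eq_zero_or_pos i with rfl | hi'
      · rw [hesucc, if_pos Even.zero, he0]; exact hT1w
      · rw [hesucc]
        split_ifs
        · exact F3L hhom _ (ih hi')
        · exact F3R hhom _ (ih hi')
  have hlow' : ∀ i, 1 ≤ i →
      altProd T1 T2 i (wd K X w) ∈ (lowSub (N + p) w : Submodule K (F K X)) := by
    intro i hi
    induction i with
    | zero => omega
    | succ i ih =>
      rcases Nat.eq_zero_or_pos i with rfl | hi'
      · rw [he'succ, if_pos Even.zero, he'0]; exact hT2w
      · rw [he'succ]
        split_ifs
        · exact F3R hhom _ (ih hi')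
        · exact F3L hhom _ (ih hi')
  set A1 := ∑ i ∈ (Finset.range k).filter (fun i => Even i),
    (altProd T2 T1 i (wd K X w) - T1 (altProd T2 T1 i (wd K X w))) with hA1
  set A2 := ∑ i ∈ (Finset.range k).filter (fun i => ¬ Even i),
    (altProd T2 T1 i (wd K X w) - T2 (altProd T2 T1 i (wd K X w))) with hA2
  set B2 := ∑ i ∈ (Finset.range k).filter (fun i => Even i),
    (altProd T1 T2 i (wd K X w) - T2 (altProd T1 T2 i (wd K X w))) with hB2
  set B1 := ∑ i ∈ (Finset.range k).filter (fun i => ¬ Even i),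
    (altProd T1 T2 i (wd K X w) - T1 (altProd T1 T2 i (wd K X w))) with hB1
  have hAA : A1 + A2 = wd K X w - altProd T2 T1 k (wd K X w) := by
    rw [hA1, hA2]
    have e1 : ∑ i ∈ (Finset.range k).filter (fun i => Even i),
        (altProd T2 T1 i (wd K X w) - T1 (altProd T2 T1 i (wd K X w)))
      = ∑ i ∈ (Finset.range k).filter (fun i => Even i),
        (altProd T2 T1 i (wd K X w) - altProd T2 T1 (i+1) (wd K X w)) := by
      refine Finset.sum_congr rfl fun i hi => ?_
      rw [hesucc, if_pos (Finset.mem_filter.mp hi).2]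
    have e2 : ∑ i ∈ (Finset.range k).filter (fun i => ¬ Even i),
        (altProd T2 T1 i (wd K X w) - T2 (altProd T2 T1 i (wd K X w)))
      = ∑ i ∈ (Finset.range k).filter (fun i => ¬ Even i),
        (altProd T2 T1 i (wd K X w) - altProd T2 T1 (i+1) (wd K X w)) := by
      refine Finset.sum_congr rfl fun i hi => ?_
      rw [hesucc, if_neg (Finset.mem_filter.mp hi).2]
    rw [e1, e2, Finset.sum_filter_add_sum_filter_not,
      Finset.sum_range_sub' (fun i => altProd T2 T1 i (wd K X w)) k, he0]
  have hBB : B2 + B1 = wd K X w - altProd T1 T2 k (wd K X w) := by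
    rw [hB2, hB1]
    have e1 : ∑ i ∈ (Finset.range k).filter (fun i => Even i),
        (altProd T1 T2 i (wd K X w) - T2 (altProd T1 T2 i (wd K X w)))
      = ∑ i ∈ (Finset.range k).filter (fun i => Even i),
        (altProd T1 T2 i (wd K X w) - altProd T1 T2 (i+1) (wd K X w)) := by
      refine Finset.sum_congr rfl fun i hi => ?_
      rw [he'succ, if_pos (Finset.mem_filter.mp hi).2]
    have e2 : ∑ i ∈ (Finset.range k).filter (fun i => ¬ Even i),
        (altProd T1 T2 i (wd K X w) - T1 (altProd T1 T2 i (wd K X w)))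
      = ∑ i ∈ (Finset.range k).filter (fun i => ¬ Even i),
        (altProd T1 T2 i (wd K X w) - altProd T1 T2 (i+1) (wd K X w)) := by
      refine Finset.sum_congr rfl fun i hi => ?_
      rw [he'succ, if_neg (Finset.mem_filter.mp hi).2]
    rw [e1, e2, Finset.sum_filter_add_sum_filter_not,
      Finset.sum_range_sub' (fun i => altProd T1 T2 i (wd K X w)) k, he'0]
  have hEq : A1 + A2 = B2 + B1 := by rw [hAA, hBB, hkeq]
  have hA1mem : A1 ∈ Submodule.span K R * degSub K X p :=
    Submodule.sum_mem _ fun i _ => F1L _ (hdeg i)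
  have hB1mem : B1 ∈ Submodule.span K R * degSub K X p :=
    Submodule.sum_mem _ fun i _ => F1L _ (hdeg' i)
  have hA2mem : A2 ∈ degSub K X p * Submodule.span K R :=
    Submodule.sum_mem _ fun i _ => F1R _ (hdeg i)
  have hB2mem : B2 ∈ degSub K X p * Submodule.span K R :=
    Submodule.sum_mem _ fun i _ => F1R _ (hdeg' i)
  have h0mem : (0 : ℕ) ∈ (Finset.range k).filter (fun i => Even i) := by
    rw [Finset.mem_filter, Finset.mem_range]
    exact ⟨by omega, Even.zero⟩
  have hA1split : A1 = (wd K X w - T1 (wd K X w))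
      + ∑ i ∈ ((Finset.range k).filter (fun i => Even i)).erase 0,
        (altProd T2 T1 i (wd K X w) - T1 (altProd T2 T1 i (wd K X w))) := by
    rw [hA1, ← Finset.add_sum_erase _ _ h0mem, he0]
  have hrest : ∑ i ∈ ((Finset.range k).filter (fun i => Even i)).erase 0,
      (altProd T2 T1 i (wd K X w) - T1 (altProd T2 T1 i (wd K X w)))
      ∈ (lowSub (N + p) w : Submodule K (F K X)) := by
    refine Submodule.sum_mem _ fun i hi => ?_
    have hi0 : i ≠ 0 := Finset.ne_of_mem_erase hi
    have hilow := hlow i (by omega)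
    exact Submodule.sub_mem _ hilow (F3L hhom _ hilow)
  have hB1low : B1 ∈ (lowSub (N + p) w : Submodule K (F K X)) := by
    rw [hB1]
    refine Submodule.sum_mem _ fun i hi => ?_
    have hodd : ¬ Even i := (Finset.mem_filter.mp hi).2
    have hi0 : i ≠ 0 := fun h => hodd (h ▸ Even.zero)
    have hilow := hlow' i (by omega)
    exact Submodule.sub_mem _ hilow (F3L hhom _ hilow)
  have hz : A1 - B1 - wd K X w ∈ (lowSub (N + p) w : Submodule K (F K X)) := by
    have e : A1 - B1 - wd K X w
        = ((∑ i ∈ ((Finset.range k).filter (fun i => Even i)).erase 0,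
            (altProd T2 T1 i (wd K X w) - T1 (altProd T2 T1 i (wd K X w)))) - B1)
          - T1 (wd K X w) := by
      rw [hA1split]; abel
    rw [e]
    exact Submodule.sub_mem _ (Submodule.sub_mem _ hrest hB1low) hT1w
  refine ⟨A1 - B1, ?_, Submodule.sub_mem _ hA1mem hB1mem, ?_, ?_⟩
  · have e : A1 - B1 = B2 - A2 := sub_eq_sub_iff_add_eq_add.mpr hEq
    rw [e]
    exact Submodule.sub_mem _ hB2mem hA2mem
  · have e : A1 - B1 = wd K X w + (A1 - B1 - wd K X w) := by abel
    rw [e, MonoidAlgebra.coeff_add, Finsupp.add_apply, wd_apply_self, lowSub_apply_eq_zero hz]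
    simp
  · intro u hu
    have e : A1 - B1 = wd K X w + (A1 - B1 - wd K X w) := by abel
    rw [e, MonoidAlgebra.coeff_add] at hu
    rcases Finset.mem_union.mp (Finsupp.support_add hu) with hh | hh
    · rw [support_wd, Finset.mem_singleton] at hh
      exact le_of_eq hh
    · exact le_of_lt (hz u hh).2

end Aux

end CC

open CC in
/-- Suppose the reduced `N`-homogeneous presentation `⟨X|R⟩` is
extra-confluent (side-confluent and the extra-condition holds, `X` finite).  Let
`w = w₁w₂w₃ = x_1⋯x_m` be the source of a critical branching `(w₁,w₂,w₃,f,g)` of `⟨X|R⟩`.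
Then the length-`N` subword `x_{m−N}⋯x_{m−1}` of `w` is not a normal form for `⟨X|R⟩`. -/
theorem stmt6 (K : Type*) [Field K] (X : Type*) [Fintype X] [LinearOrder X]
    (N : ℕ) (hN : 2 ≤ N) (R : Set (F K X))
    (hhom : NHomogLC1 K X N R) (hred : Reduced K X R)
    (hside : SideConfluent K X N R) (hec : ExtraCondition K X N R)
    (w1 w2 w3 : FreeMonoid X) (f g : F K X)
    (hf : f ∈ R) (hg : g ∈ R)
    (hw1 : w1 ≠ 1) (hw2 : w2 ≠ 1) (hw3 : w3 ≠ 1)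
    (hfw : w1 * w2 = lm K X f) (hgw : w2 * w3 = lm K X g) :
    ¬ IsNormalForm K X R
      (wd K X (FreeMonoid.ofList
        (((FreeMonoid.toList (w1 * w2 * w3)).drop (wlen X (w1 * w2 * w3) - N - 1)).take N))) := by
  classical
  have hf0 : f ≠ 0 := R_ne_zero hhom hf
  have hg0 : g ≠ 0 := R_ne_zero hhom hg
  have hlmf : wlen X (lm K X f) = N := (hhom f hf).1 _ (lm_mem hf0)
  have hlmg : wlen X (lm K X g) = N := (hhom g hg).1 _ (lm_mem hg0)
  have h12 : wlen X w1 + wlen X w2 = N := by rw [← wlen_mul, hfw]; exact hlmf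
  have h23 : wlen X w2 + wlen X w3 = N := by rw [← wlen_mul, hgw]; exact hlmg
  have hw2p : 1 ≤ wlen X w2 := one_le_wlen hw2
  have hw1p : 1 ≤ wlen X w1 := one_le_wlen hw1
  have hw3p : 1 ≤ wlen X w3 := one_le_wlen hw3
  set p := wlen X w3 with hp
  have hp1 : 1 ≤ p := hw3p
  have hpN : p ≤ N - 1 := by omega
  have hw1len : wlen X w1 = p := by omega
  have hm : wlen X (w1 * w2 * w3) = N + p := by rw [wlen_mul, wlen_mul]; omega
  have h12len : (FreeMonoid.toList (w1 * w2)).length = N := by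
    have : wlen X (w1 * w2) = N := by rw [wlen_mul]; omega
    exact this
  have htake : FreeMonoid.ofList ((FreeMonoid.toList (w1 * w2 * w3)).take N) = w1 * w2 := by
    apply FreeMonoid.toList.injective
    simp only [FreeMonoid.toList_ofList]
    rw [show w1 * w2 * w3 = (w1 * w2) * w3 from rfl, FreeMonoid.toList_mul]
    exact List.take_left' h12len
  have hexL : ∃ f' ∈ R, lm K X f'
      = FreeMonoid.ofList ((FreeMonoid.toList (w1 * w2 * w3)).take N) :=
    ⟨f, hf, by rw [htake, hfw]⟩
  by_cases hp2 : 2 ≤ p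
  · -- main case
    have hdrop : FreeMonoid.ofList ((FreeMonoid.toList (w1 * w2 * w3)).drop p) = w2 * w3 := by
      apply FreeMonoid.toList.injective
      simp only [FreeMonoid.toList_ofList]
      rw [mul_assoc, FreeMonoid.toList_mul]
      exact List.drop_left' hw1len
    have hexR : ∃ f' ∈ R, lm K X f'
        = FreeMonoid.ofList ((FreeMonoid.toList (w1 * w2 * w3)).drop p) :=
      ⟨g, hg, by rw [hdrop, hgw]⟩
    obtain ⟨k, hk1, hkeq⟩ := hside p hp1 hpN
    have hWdeg : wd K X (w1 * w2 * w3) ∈ degSub K X (N + p) := by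
      have := wd_mem_degSub (K := K) (w1 * w2 * w3)
      rwa [hm] at this
    obtain ⟨h, hmem2, hmem1, hw0, hsupp⟩ :=
      stepA hhom hm hexL hexR hk1 (hkeq (wd K X (w1 * w2 * w3)) hWdeg)
    have hmem3 : h ∈ degSub K X (p - 1) * Submodule.span K R * degSub K X 1 :=
      hec p hp2 hpN ⟨hmem2, hmem1⟩
    have hwlen' : wlen X (w1 * w2 * w3) = (p - 1) + N + 1 := by omega
    obtain ⟨f₀, hf₀R, hf₀lm⟩ := stepC hhom hred hwlen' hmem3 hw0 hsupp
    have hidx : wlen X (w1 * w2 * w3) - N - 1 = p - 1 := by omega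
    rw [hidx, ← hf₀lm]
    exact not_isNormalForm_lm hhom hf₀R
  · -- p = 1
    have hpe : p = 1 := by omega
    have hidx : wlen X (w1 * w2 * w3) - N - 1 = 0 := by omega
    rw [hidx, List.drop_zero, htake, hfw]
    exact not_isNormalForm_lm hhom hf
end

section
/- Suppose the presentation ⟨X|R⟩ is extra-confluent. Let w1 be a word over X, let w2 be a word of length N−1, and let x1, x2 ∈ X be such that: (1) w1x1 and x1w2 are normal forms for ⟨X|R⟩, and (2) w2x2 is not a normal form for ⟨X|R⟩. Then the word w1x1w2 is a normal form for ⟨X|R⟩. -/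
open scoped TensorProduct
set_option linter.unusedSectionVars false

instance {R M : Type*} [Semiring R] : CoeFun (MonoidAlgebra R M) (fun _ => M → R) :=
  ⟨fun p => ⇑p.coeff⟩

namespace S7
open CC
variable {K : Type*} [Field K] {X : Type*} [Fintype X] [LinearOrder X]

lemma toList_lt {a b : FreeMonoid X} : a < b ↔ FreeMonoid.toList a < FreeMonoid.toList b :=
  Iff.rfl

lemma toList_le {a b : FreeMonoid X} : a ≤ b ↔ FreeMonoid.toList a ≤ FreeMonoid.toList b :=
  Iff.rfl

lemma wlen_mul (a b : FreeMonoid X) : wlen X (a * b) = wlen X a + wlen X b := by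
  simp [wlen, FreeMonoid.toList_mul]

lemma wd_mul (u v : FreeMonoid X) : wd K X u * wd K X v = wd K X (u * v) := by
  simp [wd]

lemma wd_def (u : FreeMonoid X) : wd K X u = MonoidAlgebra.single u 1 := rfl

lemma wd_apply_self (u : FreeMonoid X) : wd K X u u = 1 := by
  simp [wd_def, MonoidAlgebra.coeff_single, Finsupp.single_apply]

lemma wd_apply_ne {u v : FreeMonoid X} (h : v ≠ u) : wd K X u v = 0 := by
  simp [wd_def, MonoidAlgebra.coeff_single, Finsupp.single_apply, h.symm]

lemma lc_wd_apply (v : FreeMonoid X → F K X) (p : F K X) :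
    (Finsupp.linearCombination K v ∘ₗ (MonoidAlgebra.coeffLinearEquiv K).toLinearMap) p
      = Finsupp.linearCombination K v p.coeff := rfl

end S7
namespace S7
open CC
variable {K : Type*} [Field K] {X : Type*} [Fintype X] [LinearOrder X]

lemma lex_append_right {a b : List X} (hl : a.length = b.length)
    (h : List.Lex (· < ·) a b) : ∀ v : List X, List.Lex (· < ·) (a ++ v) (b ++ v) := by
  induction h with
  | nil => simp at hl
  | @rel a₁ l₁ a₂ l₂ hr => exact fun v => List.Lex.rel hr
  | @cons a l₁ l₂ hlex ih =>
      intro v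
      exact List.Lex.cons (ih (by simpa using hl) v)

lemma mul_le_mul_right_word {a b : FreeMonoid X} (hl : wlen X a = wlen X b)
    (h : a ≤ b) (v : FreeMonoid X) : a * v ≤ b * v := by
  rcases h.lt_or_eq with h | h
  · exact le_of_lt (by
      rw [toList_lt] at h ⊢
      simp only [FreeMonoid.toList_mul]
      exact lex_append_right hl h _)
  · rw [h]

lemma mul_le_mul_left_word {a b : FreeMonoid X} (h : a ≤ b) (v : FreeMonoid X) :
    v * a ≤ v * b := by
  rcases h.lt_or_eq with h | h
  · refine le_of_lt ?_
    rw [toList_lt] at h ⊢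
    simp only [FreeMonoid.toList_mul]
    exact List.Lex.append_left _ h _
  · rw [h]

lemma lm_mem {p : F K X} (hp : p ≠ 0) : lm K X p ∈ p.coeff.support := by
  have h : p.coeff.support.Nonempty := Finsupp.support_nonempty_iff.mpr
    (fun h => hp (MonoidAlgebra.coeff_injective (h.trans MonoidAlgebra.coeff_zero.symm)))
  obtain ⟨b, hb⟩ := Finset.max_of_nonempty h
  have := Finset.mem_of_max hb
  simpa [lm, hb] using this

lemma le_lm {p : F K X} {w : FreeMonoid X} (hw : w ∈ p.coeff.support) : w ≤ lm K X p := by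
  have hb := Finset.le_max hw
  have hp : p ≠ 0 := by rintro rfl; simp at hw
  obtain ⟨b, hbe⟩ := Finset.max_of_nonempty (Finsupp.support_nonempty_iff.mpr
    (fun h => hp (MonoidAlgebra.coeff_injective (h.trans MonoidAlgebra.coeff_zero.symm))))
  rw [hbe] at hb
  simpa [lm, hbe] using hb

lemma lm_coeff_ne {p : F K X} (hp : p ≠ 0) : p (lm K X p) ≠ 0 :=
  Finsupp.mem_support_iff.mp (lm_mem hp)

end S7
namespace S7
open CC
variable {K : Type*} [Field K] {X : Type*} [Fintype X] [LinearOrder X]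

/-- Expansion of a linear map on a Finsupp via monomials. -/
lemma lin_apply (T : F K X →ₗ[K] F K X) (p : F K X) :
    T p = ∑ w ∈ p.coeff.support, p w • T (wd K X w) := by
  conv_lhs => rw [← MonoidAlgebra.sum_coeff_single p]
  rw [Finsupp.sum, map_sum]
  refine Finset.sum_congr rfl fun w _ => ?_
  rw [← map_smul]
  congr 1
  rw [wd_def, MonoidAlgebra.smul_single', mul_one]

lemma mul_wd_sum (p : F K X) (t : FreeMonoid X) :
    p * wd K X t = ∑ w ∈ p.coeff.support, p w • wd K X (w * t) := by
  conv_lhs => rw [← MonoidAlgebra.sum_coeff_single p]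
  rw [Finsupp.sum, Finset.sum_mul]
  refine Finset.sum_congr rfl fun w _ => ?_
  rw [wd_def, wd_def, MonoidAlgebra.smul_single', mul_one, MonoidAlgebra.single_mul_single]
  simp [MonoidAlgebra.smul_single]

lemma wd_mul_sum (p : F K X) (t : FreeMonoid X) :
    wd K X t * p = ∑ w ∈ p.coeff.support, p w • wd K X (t * w) := by
  conv_lhs => rw [← MonoidAlgebra.sum_coeff_single p]
  rw [Finsupp.sum, Finset.mul_sum]
  refine Finset.sum_congr rfl fun w _ => ?_
  rw [wd_def, wd_def, MonoidAlgebra.smul_single', mul_one, MonoidAlgebra.single_mul_single]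
  simp [MonoidAlgebra.smul_single]

lemma mul_wd_apply (p : F K X) (t w : FreeMonoid X) : (p * wd K X t) (w * t) = p w := by
  rw [wd_def]
  rw [MonoidAlgebra.coeff_mul_single_eq_coeff_mul (r := (1:K)) (m := t) (m₁ := w * t) (x := p)
    w (fun a _ => ⟨fun h => mul_right_cancel h, fun h => by rw [h]⟩), mul_one]

lemma wd_mul_apply (p : F K X) (t w : FreeMonoid X) : (wd K X t * p) (t * w) = p w := by
  rw [wd_def]
  rw [MonoidAlgebra.coeff_single_mul_eq_mul_coeff (r := (1:K)) (m := t) (m₁ := t * w) (x := p)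
    w (fun a _ => ⟨fun h => mul_left_cancel h, fun h => by rw [h]⟩), one_mul]

lemma mul_wd_support {p : F K X} {t u : FreeMonoid X} (hu : u ∈ (p * wd K X t).coeff.support) :
    ∃ w ∈ p.coeff.support, u = w * t := by
  classical
  rw [mul_wd_sum] at hu
  have := Finsupp.mem_support_iff.mp hu
  by_contra hc
  push_neg at hc
  apply this
  rw [MonoidAlgebra.coeff_sum, Finsupp.finset_sum_apply]
  refine Finset.sum_eq_zero fun w hw => ?_
  rw [MonoidAlgebra.coeff_smul_apply, wd_apply_ne (hc w hw), smul_zero]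

lemma wd_mul_support {p : F K X} {t u : FreeMonoid X} (hu : u ∈ (wd K X t * p).coeff.support) :
    ∃ w ∈ p.coeff.support, u = t * w := by
  classical
  rw [wd_mul_sum] at hu
  have := Finsupp.mem_support_iff.mp hu
  by_contra hc
  push_neg at hc
  apply this
  rw [MonoidAlgebra.coeff_sum, Finsupp.finset_sum_apply]
  refine Finset.sum_eq_zero fun w hw => ?_
  rw [MonoidAlgebra.coeff_smul_apply, wd_apply_ne (hc w hw), smul_zero]

end S7
namespace S7
open CC
variable {K : Type*} [Field K] {X : Type*} [Fintype X] [LinearOrder X]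
variable {N : ℕ} {R : Set (F K X)}

lemma g_ne_zero (hhom : NHomogLC1 K X N R) {g : F K X} (hg : g ∈ R) : g ≠ 0 := by
  intro h
  have := (hhom g hg).2
  rw [h] at this
  simp at this

lemma lm_coeff_one (hhom : NHomogLC1 K X N R) {g : F K X} (hg : g ∈ R) :
    g (lm K X g) = 1 := (hhom g hg).2

lemma supp_wlen (hhom : NHomogLC1 K X N R) {g : F K X} (hg : g ∈ R)
    {w : FreeMonoid X} (hw : w ∈ g.coeff.support) : wlen X w = N := (hhom g hg).1 w hw

lemma wlen_lm (hhom : NHomogLC1 K X N R) {g : F K X} (hg : g ∈ R) :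
    wlen X (lm K X g) = N :=
  supp_wlen hhom hg (lm_mem (g_ne_zero hhom hg))

lemma redMap_apply (u : FreeMonoid X) (g : F K X) (v : FreeMonoid X) (p : F K X) :
    redMap K X u g v p
      = p - p (u * lm K X g * v) • (wd K X u * g * wd K X v) := by
  classical
  rw [redMap, lc_wd_apply]; erw [Finsupp.linearCombination_apply]; rw [Finsupp.sum]
  have key : ∀ w : FreeMonoid X,
      (if w = u * lm K X g * v then wd K X u * (wd K X (lm K X g) - g) * wd K X v
        else wd K X w)
      = wd K X w - (if w = u * lm K X g * v then (1:K) else 0) • (wd K X u * g * wd K X v) := by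
    intro w
    split
    · next h =>
      subst h
      rw [one_smul, mul_sub, sub_mul, wd_mul, wd_mul]
      try abel
    · rw [zero_smul, sub_zero]
  calc (∑ w ∈ p.coeff.support, p w • if w = u * lm K X g * v then
          wd K X u * (wd K X (lm K X g) - g) * wd K X v else wd K X w)
      = ∑ w ∈ p.coeff.support,
          (p w • wd K X w - (p w * if w = u * lm K X g * v then (1:K) else 0) •
            (wd K X u * g * wd K X v)) := by
        refine Finset.sum_congr rfl fun w _ => ?_
        rw [key w, smul_sub, smul_smul]
    _ = (∑ w ∈ p.coeff.support, p w • wd K X w)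
          - (∑ w ∈ p.coeff.support, (p w * if w = u * lm K X g * v then (1:K) else 0)) •
            (wd K X u * g * wd K X v) := by
        rw [Finset.sum_sub_distrib, Finset.sum_smul]
    _ = p - p (u * lm K X g * v) • (wd K X u * g * wd K X v) := by
        congr 1
        · conv_rhs => rw [← MonoidAlgebra.sum_coeff_single p]
          rw [Finsupp.sum]
          refine Finset.sum_congr rfl fun w _ => ?_
          rw [wd_def, MonoidAlgebra.smul_single', mul_one]
        · congr 1
          simp only [mul_ite, mul_one, mul_zero]
          rw [Finset.sum_ite_eq' p.coeff.support (u * lm K X g * v) (fun w => p w)]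
          split
          · rfl
          · next h => rw [not_not.mp fun hh => h (Finsupp.mem_support_iff.mpr hh)]
  -- fallback

lemma ugv_coeff (g : F K X) (u v : FreeMonoid X) :
    (wd K X u * g * wd K X v) (u * lm K X g * v) = g (lm K X g) := by
  have h1 : (wd K X u * g * wd K X v) ((u * lm K X g) * v)
      = (wd K X u * g) (u * lm K X g) := mul_wd_apply _ _ _
  rw [h1, wd_mul_apply]

lemma ugv_ne_zero (hhom : NHomogLC1 K X N R) {g : F K X} (hg : g ∈ R)
    (u v : FreeMonoid X) : wd K X u * g * wd K X v ≠ 0 := by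
  intro h
  have := ugv_coeff (K := K) (X := X) g u v
  rw [h, lm_coeff_one hhom hg] at this
  simp at this

lemma isNF_iff (hhom : NHomogLC1 K X N R) (p : F K X) :
    IsNormalForm K X R p ↔ ∀ g ∈ R, ∀ u v : FreeMonoid X, p (u * lm K X g * v) = 0 := by
  constructor
  · intro h g hg u v
    have := h u v g hg
    rw [redMap_apply] at this
    have h2 : p (u * lm K X g * v) • (wd K X u * g * wd K X v) = 0 := by
      have := sub_eq_self.mp this
      exact this
    rcases smul_eq_zero.mp h2 with h3 | h3
    · exact h3
    · exact absurd h3 (ugv_ne_zero hhom hg u v)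
  · intro h u v g hg
    rw [redMap_apply, h g hg u v, zero_smul, sub_zero]

lemma wd_not_nf_iff (hhom : NHomogLC1 K X N R) (w : FreeMonoid X) :
    ¬ IsNormalForm K X R (wd K X w) ↔ ∃ g ∈ R, ∃ u v : FreeMonoid X,
      w = u * lm K X g * v := by
  rw [isNF_iff hhom]
  constructor
  · intro h
    push_neg at h
    obtain ⟨g, hg, u, v, hne⟩ := h
    refine ⟨g, hg, u, v, ?_⟩
    by_contra hc
    exact hne (wd_apply_ne fun hh => hc hh.symm)
  · rintro ⟨g, hg, u, v, rfl⟩ h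
    have := h g hg u v
    rw [wd_apply_self] at this
    simp at this

end S7
namespace S7
open CC
variable {K : Type*} [Field K] {X : Type*} [Fintype X] [LinearOrder X]
variable {N : ℕ} {R : Set (F K X)}

lemma lm_inj (hhom : NHomogLC1 K X N R) (hred : Reduced K X R)
    {f g : F K X} (hf : f ∈ R) (hg : g ∈ R) (h : lm K X f = lm K X g) : f = g := by
  by_contra hne
  have h2 := (hred f hf).2
  rw [isNF_iff (N := N)] at h2
  · have := h2 g ⟨hg, fun hh => hne (Set.mem_singleton_iff.mp hh).symm⟩ 1 1
    rw [one_mul, mul_one, ← h, wd_apply_self] at this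
    simp at this
  · intro q hq
    exact hhom q hq.1

/-- words in the tail of `f ∈ R` are not leading monomials. -/
lemma tail_not_lm (hhom : NHomogLC1 K X N R) (hred : Reduced K X R)
    {f : F K X} (hf : f ∈ R) {w : FreeMonoid X} (hw : w ∈ f.coeff.support)
    (hne : w ≠ lm K X f) : ¬ ∃ g ∈ R, lm K X g = w := by
  rintro ⟨g, hg, rfl⟩
  have h1 := (hred f hf).1
  rw [isNF_iff hhom] at h1
  have := h1 g hg 1 1
  rw [one_mul, mul_one] at this
  rw [MonoidAlgebra.coeff_sub, Finsupp.sub_apply] at this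
  rw [wd_apply_ne (Ne.symm ?hne2)] at this
  · rw [zero_sub, neg_eq_zero] at this
    exact Finsupp.mem_support_iff.mp hw this
  · exact fun h => hne h.symm

lemma Sop_wd_of_lm (hhom : NHomogLC1 K X N R) (hred : Reduced K X R)
    {f : F K X} (hf : f ∈ R) : Sop K X R (wd K X (lm K X f)) = wd K X (lm K X f) - f := by
  classical
  rw [Sop, wd_def]
  rw [lc_wd_apply, MonoidAlgebra.coeff_single]; erw [Finsupp.linearCombination_single]
  rw [one_smul]
  have hex : ∃ g ∈ R, lm K X g = lm K X f := ⟨f, hf, rfl⟩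
  rw [dif_pos hex, wd_def]
  congr 1
  exact lm_inj hhom hred hex.choose_spec.1 hf hex.choose_spec.2

lemma Sop_wd_of_not {w : FreeMonoid X} (h : ¬ ∃ g ∈ R, lm K X g = w) :
    Sop K X R (wd K X w) = wd K X w := by
  classical
  rw [Sop, wd_def]
  rw [lc_wd_apply, MonoidAlgebra.coeff_single]; erw [Finsupp.linearCombination_single]
  rw [one_smul, dif_neg h, wd_def]

lemma Sop_eq_zero (hhom : NHomogLC1 K X N R) (hred : Reduced K X R)
    {f : F K X} (hf : f ∈ R) : Sop K X R f = 0 := by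
  classical
  rw [lin_apply]
  have hmem : lm K X f ∈ f.coeff.support := lm_mem (g_ne_zero hhom hf)
  rw [← Finset.add_sum_erase _ _ hmem, Sop_wd_of_lm hhom hred hf]
  have hrest : ∑ w ∈ f.coeff.support.erase (lm K X f), f w • Sop K X R (wd K X w)
      = ∑ w ∈ f.coeff.support.erase (lm K X f), f w • wd K X w := by
    refine Finset.sum_congr rfl fun w hw => ?_
    rw [Sop_wd_of_not (tail_not_lm hhom hred hf (Finset.mem_of_mem_erase hw)
      (Finset.ne_of_mem_erase hw))]
  have h2 : ∑ w ∈ f.coeff.support, f w • wd K X w = f := by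
    conv_rhs => rw [← MonoidAlgebra.sum_coeff_single f]
    rw [Finsupp.sum]
    refine Finset.sum_congr rfl fun w _ => ?_
    rw [wd_def, MonoidAlgebra.smul_single', mul_one]
  have h3 : ∑ w ∈ f.coeff.support.erase (lm K X f), f w • wd K X w = f - wd K X (lm K X f) := by
    refine eq_sub_of_add_eq' ?_
    calc wd K X (lm K X f) + ∑ w ∈ f.coeff.support.erase (lm K X f), f w • wd K X w
        = f (lm K X f) • wd K X (lm K X f)
            + ∑ w ∈ f.coeff.support.erase (lm K X f), f w • wd K X w := by
          rw [lm_coeff_one hhom hf, one_smul]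
      _ = f := by
          conv_rhs => rw [← h2]
          rw [← Finset.add_sum_erase _ (fun w => f w • wd K X w) hmem]
  rw [hrest, h3, smul_sub, lm_coeff_one hhom hf, one_smul]
  module

end S7
namespace S7
open CC
variable {K : Type*} [Field K] {X : Type*} [Fintype X] [LinearOrder X]
variable {N : ℕ} {R : Set (F K X)}

lemma eq_sum_wd (p : F K X) : p = ∑ w ∈ p.coeff.support, p w • wd K X w := by
  conv_lhs => rw [← MonoidAlgebra.sum_coeff_single p]
  rw [Finsupp.sum]
  refine Finset.sum_congr rfl fun w _ => ?_
  rw [wd_def, MonoidAlgebra.smul_single', mul_one]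

lemma toList_length (u : FreeMonoid X) : (FreeMonoid.toList u).length = wlen X u := rfl

lemma applyLeft_wd (S : F K X →ₗ[K] F K X) {a b : ℕ} {u v : FreeMonoid X}
    (hu : wlen X u = a) (hv : wlen X v = b) :
    applyLeft K X S a b (wd K X (u * v)) = S (wd K X u) * wd K X v := by
  rw [applyLeft, wd_def]
  rw [lc_wd_apply, MonoidAlgebra.coeff_single]; erw [Finsupp.linearCombination_single]
  rw [one_smul, if_pos (by rw [wlen_mul, hu, hv]), FreeMonoid.toList_mul,
    List.take_left' (by rw [toList_length, hu]), List.drop_left' (by rw [toList_length, hu]),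
    FreeMonoid.ofList_toList, FreeMonoid.ofList_toList]

lemma applyRight_wd (S : F K X →ₗ[K] F K X) {a b : ℕ} {u v : FreeMonoid X}
    (hu : wlen X u = a) (hv : wlen X v = b) :
    applyRight K X S a b (wd K X (u * v)) = wd K X u * S (wd K X v) := by
  rw [applyRight, wd_def]
  rw [lc_wd_apply, MonoidAlgebra.coeff_single]; erw [Finsupp.linearCombination_single]
  rw [one_smul, if_pos (by rw [wlen_mul, hu, hv]), FreeMonoid.toList_mul,
    List.take_left' (by rw [toList_length, hu]), List.drop_left' (by rw [toList_length, hu]),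
    FreeMonoid.ofList_toList, FreeMonoid.ofList_toList]

lemma applyLeft_wd_other (S : F K X →ₗ[K] F K X) {a b : ℕ} {w : FreeMonoid X}
    (h : wlen X w ≠ a + b) : applyLeft K X S a b (wd K X w) = wd K X w := by
  rw [applyLeft, wd_def]
  rw [lc_wd_apply, MonoidAlgebra.coeff_single]; erw [Finsupp.linearCombination_single]
  rw [one_smul, if_neg h, wd_def]

lemma applyRight_wd_other (S : F K X →ₗ[K] F K X) {a b : ℕ} {w : FreeMonoid X}
    (h : wlen X w ≠ a + b) : applyRight K X S a b (wd K X w) = wd K X w := by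
  rw [applyRight, wd_def]
  rw [lc_wd_apply, MonoidAlgebra.coeff_single]; erw [Finsupp.linearCombination_single]
  rw [one_smul, if_neg h, wd_def]

open Classical in
/-- `id_{V^{⊗a}} ⊗ S ⊗ id_{V^{⊗c}}` realized on `K⟨X⟩`. -/
noncomputable def applyMid (S : F K X →ₗ[K] F K X) (a b c : ℕ) : F K X →ₗ[K] F K X :=
  Finsupp.linearCombination K (fun w : FreeMonoid X =>
    if wlen X w = a + b + c then
      wd K X (FreeMonoid.ofList ((FreeMonoid.toList w).take a)) *
        S (wd K X (FreeMonoid.ofList (((FreeMonoid.toList w).drop a).take b))) *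
        wd K X (FreeMonoid.ofList ((FreeMonoid.toList w).drop (a + b)))
    else wd K X w) ∘ₗ (MonoidAlgebra.coeffLinearEquiv K).toLinearMap

lemma applyMid_wd (S : F K X →ₗ[K] F K X) {a b c : ℕ} {u x v : FreeMonoid X}
    (hu : wlen X u = a) (hx : wlen X x = b) (hv : wlen X v = c) :
    applyMid S a b c (wd K X (u * x * v)) = wd K X u * S (wd K X x) * wd K X v := by
  rw [applyMid, wd_def]
  rw [lc_wd_apply, MonoidAlgebra.coeff_single]; erw [Finsupp.linearCombination_single]
  have hlen : wlen X (u * x * v) = a + b + c := by rw [wlen_mul, wlen_mul, hu, hx, hv]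
  have htake : (FreeMonoid.toList (u * x * v)).take a = FreeMonoid.toList u := by
    rw [FreeMonoid.toList_mul, FreeMonoid.toList_mul, List.append_assoc,
      List.take_left' (by rw [toList_length, hu])]
  have hdrop : (FreeMonoid.toList (u * x * v)).drop a
      = FreeMonoid.toList x ++ FreeMonoid.toList v := by
    rw [FreeMonoid.toList_mul, FreeMonoid.toList_mul, List.append_assoc,
      List.drop_left' (by rw [toList_length, hu])]
  have hdrop2 : (FreeMonoid.toList (u * x * v)).drop (a + b) = FreeMonoid.toList v := by
    rw [FreeMonoid.toList_mul, FreeMonoid.toList_mul,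
      List.drop_left' (by rw [List.length_append, toList_length, toList_length, hu, hx])]
  rw [one_smul, if_pos hlen, htake, hdrop, hdrop2,
    List.take_left' (by rw [toList_length, hx]), FreeMonoid.ofList_toList,
    FreeMonoid.ofList_toList, FreeMonoid.ofList_toList]

lemma applyMid_wd_other (S : F K X →ₗ[K] F K X) {a b c : ℕ} {w : FreeMonoid X}
    (h : wlen X w ≠ a + b + c) : applyMid S a b c (wd K X w) = wd K X w := by
  rw [applyMid, wd_def]
  rw [lc_wd_apply, MonoidAlgebra.coeff_single]; erw [Finsupp.linearCombination_single]
  rw [one_smul, if_neg h, wd_def]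

lemma degSub_mul {a b : ℕ} {p q : F K X} (hp : p ∈ degSub K X a) (hq : q ∈ degSub K X b) :
    p * q ∈ degSub K X (a + b) := by
  classical
  intro w hw
  obtain ⟨x, hx, y, hy, rfl⟩ := Finset.mem_mul.mp (MonoidAlgebra.support_coeff_mul_subset p q hw)
  rw [wlen_mul, hp x hx, hq y hy]

lemma spanR_le_degSub (hhom : NHomogLC1 K X N R) :
    Submodule.span K R ≤ degSub K X N :=
  Submodule.span_le.mpr fun f hf => (hhom f hf).1

lemma wd_mem_degSub {t : FreeMonoid X} {m : ℕ} (ht : wlen X t = m) :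
    wd K X t ∈ degSub K X m := by
  intro w hw
  rw [wd_def] at hw
  have := Finsupp.support_single_subset hw
  simp only [Finset.mem_singleton] at this
  rw [this, ht]

end S7
namespace S7
open CC
variable {K : Type*} [Field K] {X : Type*} [Fintype X] [LinearOrder X]
variable {N : ℕ} {R : Set (F K X)}

lemma applyLeft_kills_aux (hhom : NHomogLC1 K X N R) (hred : Reduced K X R) (m : ℕ)
    {a : F K X} (ha : a ∈ Submodule.span K R) {t : FreeMonoid X} (ht : wlen X t = m) :
    applyLeft K X (Sop K X R) N m (a * wd K X t) = 0 := by
  induction ha using Submodule.span_induction with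
  | mem f hf =>
      rw [mul_wd_sum, map_sum]
      have : ∀ w ∈ f.coeff.support,
          applyLeft K X (Sop K X R) N m (f w • wd K X (w * t))
            = f w • (Sop K X R (wd K X w) * wd K X t) := by
        intro w hw
        rw [map_smul, applyLeft_wd _ (supp_wlen hhom hf hw) ht]
      rw [Finset.sum_congr rfl this]
      have : ∑ w ∈ f.coeff.support, f w • (Sop K X R (wd K X w) * wd K X t)
          = (∑ w ∈ f.coeff.support, f w • Sop K X R (wd K X w)) * wd K X t := by
        rw [Finset.sum_mul]
        exact Finset.sum_congr rfl fun w _ => (smul_mul_assoc _ _ _).symm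
      rw [this, ← lin_apply, Sop_eq_zero hhom hred hf, zero_mul]
  | zero => rw [zero_mul, map_zero]
  | add x y _ _ hx hy => rw [add_mul, map_add, hx, hy, add_zero]
  | smul c x _ hx => rw [smul_mul_assoc, map_smul, hx, smul_zero]

lemma applyLeft_kills (hhom : NHomogLC1 K X N R) (hred : Reduced K X R) (m : ℕ)
    {c : F K X} (hc : c ∈ Submodule.span K R * degSub K X m) :
    applyLeft K X (Sop K X R) N m c = 0 := by
  refine Submodule.mul_induction_on hc (fun a ha b hb => ?_)
    (fun x y hx hy => by rw [map_add, hx, hy, add_zero])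
  conv_lhs => rw [eq_sum_wd b]
  rw [Finset.mul_sum, map_sum]
  refine Finset.sum_eq_zero fun t htm => ?_
  rw [mul_smul_comm, map_smul, applyLeft_kills_aux hhom hred m ha (hb t htm), smul_zero]

lemma applyRight_kills_aux (hhom : NHomogLC1 K X N R) (hred : Reduced K X R) (m : ℕ)
    {a : F K X} (ha : a ∈ Submodule.span K R) {t : FreeMonoid X} (ht : wlen X t = m) :
    applyRight K X (Sop K X R) m N (wd K X t * a) = 0 := by
  induction ha using Submodule.span_induction with
  | mem f hf =>
      rw [wd_mul_sum, map_sum]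
      have : ∀ w ∈ f.coeff.support,
          applyRight K X (Sop K X R) m N (f w • wd K X (t * w))
            = f w • (wd K X t * Sop K X R (wd K X w)) := by
        intro w hw
        rw [map_smul, applyRight_wd _ ht (supp_wlen hhom hf hw)]
      rw [Finset.sum_congr rfl this]
      have : ∑ w ∈ f.coeff.support, f w • (wd K X t * Sop K X R (wd K X w))
          = wd K X t * ∑ w ∈ f.coeff.support, f w • Sop K X R (wd K X w) := by
        rw [Finset.mul_sum]
        exact Finset.sum_congr rfl fun w _ => (mul_smul_comm _ _ _).symm
      rw [this, ← lin_apply, Sop_eq_zero hhom hred hf, mul_zero]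
  | zero => rw [mul_zero, map_zero]
  | add x y _ _ hx hy => rw [mul_add, map_add, hx, hy, add_zero]
  | smul c x _ hx => rw [mul_smul_comm, map_smul, hx, smul_zero]

lemma applyRight_kills (hhom : NHomogLC1 K X N R) (hred : Reduced K X R) (m : ℕ)
    {c : F K X} (hc : c ∈ degSub K X m * Submodule.span K R) :
    applyRight K X (Sop K X R) m N c = 0 := by
  refine Submodule.mul_induction_on hc (fun b hb a ha => ?_)
    (fun x y hx hy => by rw [map_add, hx, hy, add_zero])
  conv_lhs => rw [eq_sum_wd b]
  rw [Finset.sum_mul, map_sum]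
  refine Finset.sum_eq_zero fun t htm => ?_
  rw [smul_mul_assoc, map_smul, applyRight_kills_aux hhom hred m ha (hb t htm), smul_zero]

lemma applyMid_kills_aux (hhom : NHomogLC1 K X N R) (hred : Reduced K X R) (a c : ℕ)
    {p : F K X} (hp : p ∈ Submodule.span K R) {u v : FreeMonoid X}
    (hu : wlen X u = a) (hv : wlen X v = c) :
    applyMid (Sop K X R) a N c (wd K X u * p * wd K X v) = 0 := by
  induction hp using Submodule.span_induction with
  | mem f hf =>
      have hexp : wd K X u * f * wd K X v
          = ∑ w ∈ f.coeff.support, f w • wd K X (u * w * v) := by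
        rw [wd_mul_sum, Finset.sum_mul]
        refine Finset.sum_congr rfl fun w _ => ?_
        rw [smul_mul_assoc, wd_mul]
      rw [hexp, map_sum]
      have : ∀ w ∈ f.coeff.support,
          applyMid (Sop K X R) a N c (f w • wd K X (u * w * v))
            = f w • (wd K X u * Sop K X R (wd K X w) * wd K X v) := by
        intro w hw
        rw [map_smul, applyMid_wd _ hu (supp_wlen hhom hf hw) hv]
      rw [Finset.sum_congr rfl this]
      have : ∑ w ∈ f.coeff.support, f w • (wd K X u * Sop K X R (wd K X w) * wd K X v)
          = wd K X u * (∑ w ∈ f.coeff.support, f w • Sop K X R (wd K X w)) * wd K X v := by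
        rw [Finset.mul_sum, Finset.sum_mul]
        refine Finset.sum_congr rfl fun w _ => ?_
        rw [mul_smul_comm, smul_mul_assoc]
      rw [this, ← lin_apply, Sop_eq_zero hhom hred hf, mul_zero, zero_mul]
  | zero => rw [mul_zero, zero_mul, map_zero]
  | add x y _ _ hx hy => rw [mul_add, add_mul, map_add, hx, hy, add_zero]
  | smul k x _ hx => rw [mul_smul_comm, smul_mul_assoc, map_smul, hx, smul_zero]

lemma applyMid_kills (hhom : NHomogLC1 K X N R) (hred : Reduced K X R) (a c : ℕ)
    {q : F K X} (hq : q ∈ degSub K X a * Submodule.span K R * degSub K X c) :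
    applyMid (Sop K X R) a N c q = 0 := by
  refine Submodule.mul_induction_on hq (fun x hx b hb => ?_)
    (fun x y hx hy => by rw [map_add, hx, hy, add_zero])
  refine Submodule.mul_induction_on hx (fun d hd p hp => ?_) ?_
  · conv_lhs => rw [eq_sum_wd d, eq_sum_wd b]
    rw [Finset.sum_mul, Finset.sum_mul, map_sum]
    refine Finset.sum_eq_zero fun t htm => ?_
    rw [Finset.mul_sum, map_sum]
    refine Finset.sum_eq_zero fun y hym => ?_
    rw [smul_mul_assoc, smul_mul_assoc, mul_smul_comm, map_smul, map_smul,
      applyMid_kills_aux hhom hred a c hp (hd t htm) (hb y hym), smul_zero, smul_zero]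
  · intro x y hx hy
    rw [add_mul, map_add, hx, hy, add_zero]
end S7
namespace S7
open CC
variable {K : Type*} [Field K] {X : Type*} [Fintype X] [LinearOrder X]
variable {N : ℕ} {R : Set (F K X)}

lemma mem_support_sum {ι : Type*} {s : Finset ι} {g : ι → F K X} {u : FreeMonoid X}
    (hu : u ∈ (∑ i ∈ s, g i).coeff.support) : ∃ i ∈ s, u ∈ (g i).coeff.support := by
  by_contra hc
  push_neg at hc
  have := Finsupp.mem_support_iff.mp hu
  apply this
  rw [MonoidAlgebra.coeff_sum, Finsupp.finset_sum_apply]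
  exact Finset.sum_eq_zero fun i hi => Finsupp.notMem_support_iff.mp (hc i hi)

/-- A triangular operator. -/
def Good (T : F K X →ₗ[K] F K X) : Prop :=
  ∀ w : FreeMonoid X, ∀ u ∈ (T (wd K X w)).coeff.support, u ≤ w

lemma good_apply {T : F K X →ₗ[K] F K X} (hT : Good T) {p : F K X} {M : FreeMonoid X}
    (hp : ∀ w ∈ p.coeff.support, w ≤ M) : ∀ u ∈ (T p).coeff.support, u ≤ M := by
  intro u hu
  rw [lin_apply] at hu
  obtain ⟨w, hw, hu2⟩ := mem_support_sum hu
  have := Finsupp.support_smul hu2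
  exact le_trans (hT w u this) (hp w hw)

lemma good_one : Good (1 : F K X →ₗ[K] F K X) := by
  intro w u hu
  rw [Module.End.one_apply, wd_def] at hu
  have := Finsupp.support_single_subset hu
  simp only [Finset.mem_singleton] at this
  exact le_of_eq this

lemma good_mul {T T' : F K X →ₗ[K] F K X} (hT : Good T) (hT' : Good T') : Good (T * T') := by
  intro w u hu
  rw [Module.End.mul_apply] at hu
  exact good_apply hT (hT' w) u hu

lemma good_pow {T : F K X →ₗ[K] F K X} (hT : Good T) (n : ℕ) : Good (T ^ n) := by
  induction n with
  | zero => simpa using good_one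
  | succ n ih => rw [pow_succ]; exact good_mul ih hT

lemma good_altProd {T T' : F K X →ₗ[K] F K X} (hT : Good T) (hT' : Good T') (k : ℕ) :
    Good (altProd T T' k) := by
  rw [altProd]
  split
  · exact good_pow (good_mul hT hT') _
  · exact good_mul hT' (good_pow (good_mul hT hT') _)

lemma fix_mul {T T' : F K X →ₗ[K] F K X} {M : FreeMonoid X}
    (hT : T (wd K X M) = wd K X M) (hT' : T' (wd K X M) = wd K X M) :
    (T * T') (wd K X M) = wd K X M := by
  rw [Module.End.mul_apply, hT', hT]

lemma fix_pow {T : F K X →ₗ[K] F K X} {M : FreeMonoid X}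
    (hT : T (wd K X M) = wd K X M) (n : ℕ) : (T ^ n) (wd K X M) = wd K X M := by
  induction n with
  | zero => simp
  | succ n ih => rw [pow_succ]; exact fix_mul ih hT

lemma fix_altProd {T T' : F K X →ₗ[K] F K X} {M : FreeMonoid X}
    (hT : T (wd K X M) = wd K X M) (hT' : T' (wd K X M) = wd K X M) (k : ℕ) :
    (altProd T T' k) (wd K X M) = wd K X M := by
  rw [altProd]
  split
  · exact fix_pow (fix_mul hT hT') _
  · exact fix_mul hT' (fix_pow (fix_mul hT hT') _)

lemma altProd_kills {T T' : F K X →ₗ[K] F K X} {c : F K X} (hc : T' c = 0) {k : ℕ}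
    (hk : 1 ≤ k) : (altProd T T' k) c = 0 := by
  have hpow : ∀ j : ℕ, 1 ≤ j → ((T * T') ^ j) c = 0 := by
    intro j hj
    obtain ⟨i, rfl⟩ := Nat.exists_eq_add_of_le hj
    rw [add_comm, pow_succ, Module.End.mul_apply, Module.End.mul_apply, hc, map_zero, map_zero]
  rw [altProd]
  split
  · next he =>
    obtain ⟨j, rfl⟩ := he
    exact hpow _ (by omega)
  · rcases Nat.eq_zero_or_pos (k / 2) with h | h
    · rw [h, pow_zero, mul_one, hc]
    · rw [Module.End.mul_apply, hpow _ h, map_zero]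

lemma coeff_good {T : F K X →ₗ[K] F K X} (hT : Good T) {M : FreeMonoid X}
    (hfix : T (wd K X M) = wd K X M) {p : F K X} (hp : ∀ w ∈ p.coeff.support, w ≤ M) :
    (T p) M = p M := by
  classical
  rw [lin_apply, MonoidAlgebra.coeff_sum, Finsupp.finset_sum_apply]
  rw [Finset.sum_eq_single M (fun w hw hne => ?_) (fun hM => ?_)]
  · rw [MonoidAlgebra.coeff_smul_apply, hfix, wd_apply_self, smul_eq_mul, mul_one]
  · rw [MonoidAlgebra.coeff_smul_apply]
    have : (T (wd K X w)) M = 0 := by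
      rw [← Finsupp.notMem_support_iff]
      intro hmem
      exact hne (le_antisymm (hp w hw) (hT w M hmem))
    rw [this, smul_zero]
  · rw [Finsupp.notMem_support_iff.mp hM, zero_smul, MonoidAlgebra.coeff_zero, Finsupp.coe_zero, Pi.zero_apply]

end S7
namespace S7
open CC
variable {K : Type*} [Field K] {X : Type*} [Fintype X] [LinearOrder X]
variable {N : ℕ} {R : Set (F K X)}

/-- `w` begins with a leading monomial. -/
def Red1 (K : Type*) [Field K] {X : Type*} [Fintype X] [LinearOrder X]
    (R : Set (F K X)) (w : FreeMonoid X) : Prop :=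
  ∃ f ∈ R, ∃ v : FreeMonoid X, w = lm K X f * v

/-- `w` ends with a leading monomial. -/
def Red2 (K : Type*) [Field K] {X : Type*} [Fintype X] [LinearOrder X]
    (R : Set (F K X)) (w : FreeMonoid X) : Prop :=
  ∃ f ∈ R, ∃ v : FreeMonoid X, w = v * lm K X f

lemma word_split {w : FreeMonoid X} {a b : ℕ} (h : wlen X w = a + b) :
    ∃ u v : FreeMonoid X, w = u * v ∧ wlen X u = a ∧ wlen X v = b := by
  refine ⟨FreeMonoid.ofList ((FreeMonoid.toList w).take a),
    FreeMonoid.ofList ((FreeMonoid.toList w).drop a), ?_, ?_, ?_⟩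
  · apply FreeMonoid.toList.injective
    rw [FreeMonoid.toList_mul, FreeMonoid.toList_ofList, FreeMonoid.toList_ofList,
      List.take_append_drop]
  · show ((FreeMonoid.toList w).take a).length = a
    rw [List.length_take, toList_length, h]
    omega
  · show ((FreeMonoid.toList w).drop a).length = b
    rw [List.length_drop, toList_length, h]
    omega

lemma Sop_supp_le (hhom : NHomogLC1 K X N R) (hred : Reduced K X R) {f : F K X}
    (hf : f ∈ R) {ω : FreeMonoid X}
    (hω : ω ∈ (wd K X (lm K X f) - f).coeff.support) : ω ≤ lm K X f ∧ wlen X ω = N := by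
  classical
  have hsub := Finsupp.support_sub hω
  rw [Finset.mem_union] at hsub
  rcases hsub with h | h
  · rw [wd_def] at h
    have := Finsupp.support_single_subset h
    simp only [Finset.mem_singleton] at this
    subst this
    exact ⟨le_refl _, wlen_lm hhom hf⟩
  · exact ⟨le_lm h, supp_wlen hhom hf h⟩

lemma good_applyLeft (hhom : NHomogLC1 K X N R) (hred : Reduced K X R) (m : ℕ) :
    Good (applyLeft K X (Sop K X R) N m) := by
  intro w u hu
  by_cases hL : wlen X w = N + m
  · obtain ⟨u₁, u₂, rfl, h1, h2⟩ := word_split hL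
    rw [applyLeft_wd _ h1 h2] at hu
    by_cases hex : ∃ f ∈ R, lm K X f = u₁
    · obtain ⟨f, hf, rfl⟩ := hex
      rw [Sop_wd_of_lm hhom hred hf] at hu
      obtain ⟨ω, hω, rfl⟩ := mul_wd_support hu
      obtain ⟨hle, hlen⟩ := Sop_supp_le hhom hred hf hω
      exact mul_le_mul_right_word (by rw [hlen, h1]) hle u₂
    · rw [Sop_wd_of_not hex, wd_mul, wd_def] at hu
      have := Finsupp.support_single_subset hu
      simp only [Finset.mem_singleton] at this
      exact le_of_eq this
  · rw [applyLeft_wd_other _ hL, wd_def] at hu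
    have := Finsupp.support_single_subset hu
    simp only [Finset.mem_singleton] at this
    exact le_of_eq this

lemma good_applyRight (hhom : NHomogLC1 K X N R) (hred : Reduced K X R) (m : ℕ) :
    Good (applyRight K X (Sop K X R) m N) := by
  intro w u hu
  by_cases hL : wlen X w = m + N
  · obtain ⟨u₁, u₂, rfl, h1, h2⟩ := word_split hL
    rw [applyRight_wd _ h1 h2] at hu
    by_cases hex : ∃ f ∈ R, lm K X f = u₂
    · obtain ⟨f, hf, rfl⟩ := hex
      rw [Sop_wd_of_lm hhom hred hf] at hu
      obtain ⟨ω, hω, rfl⟩ := wd_mul_support hu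
      exact mul_le_mul_left_word (Sop_supp_le hhom hred hf hω).1 u₁
    · rw [Sop_wd_of_not hex, wd_mul, wd_def] at hu
      have := Finsupp.support_single_subset hu
      simp only [Finset.mem_singleton] at this
      exact le_of_eq this
  · rw [applyRight_wd_other _ hL, wd_def] at hu
    have := Finsupp.support_single_subset hu
    simp only [Finset.mem_singleton] at this
    exact le_of_eq this

lemma good_applyMid (hhom : NHomogLC1 K X N R) (hred : Reduced K X R) (a c : ℕ) :
    Good (applyMid (Sop K X R) a N c) := by
  intro w u hu
  by_cases hL : wlen X w = a + N + c
  · obtain ⟨u₀, u₃, rfl, h0, h3⟩ := word_split (w := w) (by rw [hL])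
    obtain ⟨u₁, u₂, rfl, h1, h2⟩ := word_split (w := u₀) (a := a) (b := N) h0
    rw [mul_assoc] at hu ⊢
    rw [← mul_assoc, applyMid_wd _ h1 h2 h3] at hu
    by_cases hex : ∃ f ∈ R, lm K X f = u₂
    · obtain ⟨f, hf, rfl⟩ := hex
      rw [Sop_wd_of_lm hhom hred hf] at hu
      obtain ⟨y, hy, rfl⟩ := mul_wd_support hu
      obtain ⟨ω, hω, rfl⟩ := wd_mul_support hy
      obtain ⟨hle, hlen⟩ := Sop_supp_le hhom hred hf hω
      rw [mul_assoc]
      refine mul_le_mul_left_word ?_ u₁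
      exact mul_le_mul_right_word (by rw [hlen, h2]) hle u₃
    · rw [Sop_wd_of_not hex, wd_mul, wd_mul, wd_def] at hu
      have := Finsupp.support_single_subset hu
      simp only [Finset.mem_singleton] at this
      rw [this, mul_assoc]
  · rw [applyMid_wd_other _ hL, wd_def] at hu
    have := Finsupp.support_single_subset hu
    simp only [Finset.mem_singleton] at this
    exact le_of_eq this

lemma fix_applyLeft {w : FreeMonoid X} (hw : ¬ Red1 K R w) (m : ℕ) :
    applyLeft K X (Sop K X R) N m (wd K X w) = wd K X w := by
  by_cases hL : wlen X w = N + m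
  · obtain ⟨u₁, u₂, rfl, h1, h2⟩ := word_split hL
    have hex : ¬ ∃ f ∈ R, lm K X f = u₁ := by
      rintro ⟨f, hf, rfl⟩
      exact hw ⟨f, hf, u₂, rfl⟩
    rw [applyLeft_wd _ h1 h2, Sop_wd_of_not hex, wd_mul]
  · exact applyLeft_wd_other _ hL

lemma fix_applyRight {w : FreeMonoid X} (hw : ¬ Red2 K R w) (m : ℕ) :
    applyRight K X (Sop K X R) m N (wd K X w) = wd K X w := by
  by_cases hL : wlen X w = m + N
  · obtain ⟨u₁, u₂, rfl, h1, h2⟩ := word_split hL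
    have hex : ¬ ∃ f ∈ R, lm K X f = u₂ := by
      rintro ⟨f, hf, rfl⟩
      exact hw ⟨f, hf, u₁, rfl⟩
    rw [applyRight_wd _ h1 h2, Sop_wd_of_not hex, wd_mul]
  · exact applyRight_wd_other _ hL

lemma fix_applyMid {w : FreeMonoid X} {a c : ℕ}
    (hw : ¬ ∃ f ∈ R, ∃ u v : FreeMonoid X, wlen X u = a ∧ w = u * lm K X f * v) :
    applyMid (Sop K X R) a N c (wd K X w) = wd K X w := by
  by_cases hL : wlen X w = a + N + c
  · obtain ⟨u₀, u₃, rfl, h0, h3⟩ := word_split (w := w) (by rw [hL])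
    obtain ⟨u₁, u₂, rfl, h1, h2⟩ := word_split (w := u₀) (a := a) (b := N) h0
    have hex : ¬ ∃ f ∈ R, lm K X f = u₂ := by
      rintro ⟨f, hf, rfl⟩
      exact hw ⟨f, hf, u₁, u₃, h1, rfl⟩
    rw [applyMid_wd _ h1 h2 h3, Sop_wd_of_not hex, wd_mul, wd_mul]
  · exact applyMid_wd_other _ hL

end S7
namespace S7
open CC
variable {K : Type*} [Field K] {X : Type*} [Fintype X] [LinearOrder X]
variable {N : ℕ} {R : Set (F K X)}

lemma K1_le_deg (hhom : NHomogLC1 K X N R) (m : ℕ) :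
    Submodule.span K R * degSub K X m ≤ degSub K X (N + m) :=
  Submodule.mul_le.mpr fun a ha b hb => degSub_mul (spanR_le_degSub hhom ha) hb

lemma K2_le_deg (hhom : NHomogLC1 K X N R) (m : ℕ) :
    degSub K X m * Submodule.span K R ≤ degSub K X (N + m) := by
  have : degSub K X m * Submodule.span K R ≤ degSub K X (m + N) :=
    Submodule.mul_le.mpr fun a ha b hb => degSub_mul ha (spanR_le_degSub hhom hb)
  rwa [Nat.add_comm m N] at this

/-- The key consequence of side-confluence: any nonzero element of
`R̄V^{⊗m} + V^{⊗m}R̄` has a leading word which is reducible on the left or on the right. -/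
lemma conf (hhom : NHomogLC1 K X N R) (hred : Reduced K X R) {m k : ℕ} (hk1 : 1 ≤ k)
    (heq : ∀ f ∈ degSub K X (N + m),
      altProd (applyRight K X (Sop K X R) m N) (applyLeft K X (Sop K X R) N m) k f =
        altProd (applyLeft K X (Sop K X R) N m) (applyRight K X (Sop K X R) m N) k f)
    {e : F K X}
    (he : e ∈ Submodule.span K R * degSub K X m ⊔ degSub K X m * Submodule.span K R)
    (hne : e ≠ 0) : Red1 K R (lm K X e) ∨ Red2 K R (lm K X e) := by
  obtain ⟨e1, he1, e2, he2, rfl⟩ := Submodule.mem_sup.mp he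
  set T1 := applyLeft K X (Sop K X R) N m with hT1
  set T2 := applyRight K X (Sop K X R) m N with hT2
  set L := altProd T2 T1 k with hL
  have hLe1 : L e1 = 0 := altProd_kills (applyLeft_kills hhom hred m he1) hk1
  have hLe2 : L e2 = 0 := by
    rw [hL, heq e2 (K2_le_deg hhom m he2)]
    exact altProd_kills (applyRight_kills hhom hred m he2) hk1
  have hLe : L (e1 + e2) = 0 := by rw [map_add, hLe1, hLe2, add_zero]
  by_contra hc
  push_neg at hc
  set M := lm K X (e1 + e2) with hM
  have hfix : L (wd K X M) = wd K X M :=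
    fix_altProd (fix_applyRight hc.2 m) (fix_applyLeft hc.1 m) k
  have hcoeff : (L (e1 + e2)) M = (e1 + e2) M :=
    coeff_good (good_altProd (good_applyRight hhom hred m) (good_applyLeft hhom hred m) k)
      hfix (fun w hw => le_lm hw)
  rw [hLe] at hcoeff
  exact lm_coeff_ne hne hcoeff.symm

variable (X) in
/-- All words of length `L`. -/
noncomputable def allWords : ℕ → Finset (FreeMonoid X)
  | 0 => {1}
  | (L + 1) => ((allWords L) ×ˢ (Finset.univ : Finset X)).image
      fun p => p.1 * FreeMonoid.of p.2

lemma mem_allWords {L : ℕ} {w : FreeMonoid X} (h : wlen X w = L) : w ∈ allWords X L := by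
  induction L generalizing w with
  | zero =>
      have : FreeMonoid.toList w = [] := List.length_eq_zero_iff.mp h
      have hw : w = 1 := FreeMonoid.toList.injective this
      rw [hw, allWords]
      exact Finset.mem_singleton_self 1
  | succ L ih =>
      have hne : FreeMonoid.toList w ≠ [] := by
        intro hnil
        rw [← toList_length, hnil] at h
        simp at h
      set l := FreeMonoid.toList w with hl
      have hsplit : l.dropLast ++ [l.getLast hne] = l := List.dropLast_append_getLast hne
      set w' := FreeMonoid.ofList l.dropLast with hw'
      have hww : w = w' * FreeMonoid.of (l.getLast hne) := by
        apply FreeMonoid.toList.injective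
        rw [FreeMonoid.toList_mul, hw', FreeMonoid.toList_ofList, FreeMonoid.toList_of, hsplit]
      have hlen' : wlen X w' = L := by
        show (FreeMonoid.toList w').length = L
        rw [hw', FreeMonoid.toList_ofList, List.length_dropLast]
        have hlL : l.length = L + 1 := by rw [hl, toList_length, h]
        omega
      rw [hww, allWords]
      exact Finset.mem_image.mpr ⟨(w', l.getLast hne),
        Finset.mem_product.mpr ⟨ih hlen', Finset.mem_univ _⟩, rfl⟩

lemma allWords_len : ∀ {L : ℕ} {w : FreeMonoid X}, w ∈ allWords X L → wlen X w = L := by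
  intro L
  induction L with
  | zero =>
      intro w hw
      rw [allWords, Finset.mem_singleton] at hw
      rw [hw]
      simp [wlen, FreeMonoid.toList_one]
  | succ L ih =>
      intro w hw
      rw [allWords, Finset.mem_image] at hw
      obtain ⟨⟨w', x⟩, hp, rfl⟩ := hw
      rw [Finset.mem_product] at hp
      rw [wlen_mul, ih hp.1]
      simp [wlen, FreeMonoid.toList_of]

lemma le_one_word {w : FreeMonoid X} (h : w ≤ 1) : w = 1 := by
  rcases h.lt_or_eq with h | h
  · exfalso
    rw [toList_lt] at h
    cases hl : FreeMonoid.toList (1 : FreeMonoid X) with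
    | nil => rw [hl] at h; cases h
    | cons a l => exact absurd hl (by simp [FreeMonoid.toList_one])
  · exact h

/-- The zig-zag construction of an element of `R̄V^{⊗m} ∩ V^{⊗m}R̄` with leading word `W`. -/
lemma zig (hhom : NHomogLC1 K X N R) (hred : Reduced K X R) {m k : ℕ} (hk1 : 1 ≤ k)
    (heq : ∀ f ∈ degSub K X (N + m),
      altProd (applyRight K X (Sop K X R) m N) (applyLeft K X (Sop K X R) N m) k f =
        altProd (applyLeft K X (Sop K X R) N m) (applyRight K X (Sop K X R) m N) k f)
    (hNm : 1 ≤ N + m) {W : FreeMonoid X} :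
    ∀ n : ℕ, ∀ c1 c2 : F K X, c1 ∈ Submodule.span K R * degSub K X m →
      c2 ∈ degSub K X m * Submodule.span K R →
      (∀ w ∈ c1.coeff.support, w ≤ W) → (∀ w ∈ c2.coeff.support, w ≤ W) →
      c1 W = 1 → c2 W = 1 →
      ((allWords X (N + m)).filter (fun w => w ≤ lm K X (c1 - c2))).card ≤ n →
      ∃ c : F K X, c ∈ Submodule.span K R * degSub K X m ∧
        c ∈ degSub K X m * Submodule.span K R ∧ c W = 1 ∧ ∀ w ∈ c.coeff.support, w ≤ W := by
  intro n
  induction n with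
  | zero =>
      intro c1 c2 h1 h2 hd1 hd2 hc1 hc2 hcard
      refine ⟨c1, h1, ?_, hc1, hd1⟩
      have he : c1 - c2 = 0 := by
        by_contra hne
        have hM := lm_mem (K := K) (X := X) hne
        have hMlen : wlen X (lm K X (c1 - c2)) = N + m := by
          have := Finsupp.support_sub hM
          rw [Finset.mem_union] at this
          rcases this with h | h
          · exact K1_le_deg hhom m h1 _ h
          · exact K2_le_deg hhom m h2 _ h
        have : lm K X (c1 - c2) ∈ (allWords X (N + m)).filter
            (fun w => w ≤ lm K X (c1 - c2)) :=
          Finset.mem_filter.mpr ⟨mem_allWords hMlen, le_refl _⟩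
        have := Finset.card_pos.mpr ⟨_, this⟩
        omega
      rw [sub_eq_zero] at he
      rwa [he]
  | succ n ih =>
      intro c1 c2 h1 h2 hd1 hd2 hc1 hc2 hcard
      set e := c1 - c2 with hedef
      by_cases hne : e = 0
      · rw [sub_eq_zero] at hne
        exact ⟨c1, h1, hne ▸ h2, hc1, hd1⟩
      set M := lm K X e with hMdef
      have hMsupp : M ∈ e.coeff.support := lm_mem hne
      have hMlen : wlen X M = N + m := by
        have := Finsupp.support_sub hMsupp
        rw [Finset.mem_union] at this
        rcases this with h | h
        · exact K1_le_deg hhom m h1 _ h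
        · exact K2_le_deg hhom m h2 _ h
      have hesupp : ∀ w ∈ e.coeff.support, w ≤ W := by
        intro w hw
        have := Finsupp.support_sub hw
        rw [Finset.mem_union] at this
        rcases this with h | h
        · exact hd1 w h
        · exact hd2 w h
      have heW : e W = 0 := by
        rw [hedef, MonoidAlgebra.coeff_sub, Finsupp.sub_apply, hc1, hc2, sub_self]
      have hMle : M ≤ W := hesupp M hMsupp
      have hMlt : M < W := lt_of_le_of_ne hMle (by
        intro hMW
        rw [hMW] at hMsupp
        exact Finsupp.mem_support_iff.mp hMsupp heW)
      have hmem : e ∈ Submodule.span K R * degSub K X m ⊔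
          degSub K X m * Submodule.span K R := by
        rw [hedef, sub_eq_add_neg]
        exact Submodule.mem_sup.mpr ⟨c1, h1, -c2, neg_mem h2, rfl⟩
      have hcard' : ∀ e' : F K X, e' M = 0 → (∀ w ∈ e'.coeff.support, w ≤ M) →
          ((allWords X (N + m)).filter (fun w => w ≤ lm K X e')).card ≤ n := by
        intro e' he'M he'supp
        by_cases hz : e' = 0
        · have : (allWords X (N + m)).filter (fun w => w ≤ lm K X e') = ∅ := by
            rw [Finset.filter_eq_empty_iff]
            intro w hw hle
            have hlm0 : lm K X e' = 1 := by rw [hz]; simp [lm]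
            rw [hlm0] at hle
            have := le_one_word hle
            have hwlen : wlen X w = N + m := allWords_len hw
            rw [this] at hwlen
            have : wlen X (1 : FreeMonoid X) = 0 := by simp [wlen, FreeMonoid.toList_one]
            omega
          rw [this]
          simp
        · have hlm' : lm K X e' < M :=
            lt_of_le_of_ne (he'supp _ (lm_mem hz))
              (fun h => Finsupp.mem_support_iff.mp (lm_mem hz) (h ▸ he'M))
          have hsub : (allWords X (N + m)).filter (fun w => w ≤ lm K X e') ⊆
              ((allWords X (N + m)).filter (fun w => w ≤ M)).erase M := by
            intro w hw
            rw [Finset.mem_filter] at hw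
            refine Finset.mem_erase.mpr ⟨?_, Finset.mem_filter.mpr ⟨hw.1, le_trans hw.2 hlm'.le⟩⟩
            intro hwM
            rw [hwM] at hw
            exact absurd (lt_of_le_of_lt hw.2 hlm') (lt_irrefl M)
          have hMmem : M ∈ (allWords X (N + m)).filter (fun w => w ≤ M) :=
            Finset.mem_filter.mpr ⟨mem_allWords hMlen, le_refl _⟩
          have := Finset.card_le_card hsub
          rw [Finset.card_erase_of_mem hMmem] at this
          have hMc := Finset.card_pos.mpr ⟨_, hMmem⟩
          omega
      rcases conf hhom hred hk1 heq hmem hne with hR | hR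
      · obtain ⟨f, hf, t, hMt⟩ := hR
        rw [← hMdef] at hMt
        have htlen : wlen X t = m := by
          have := hMlen
          rw [hMt, wlen_mul, wlen_lm hhom hf] at this
          omega
        set d := f * wd K X t with hddef
        have hdK1 : d ∈ Submodule.span K R * degSub K X m :=
          Submodule.mul_mem_mul (Submodule.subset_span hf) (wd_mem_degSub htlen)
        have hdM : d M = 1 := by
          rw [hMt, hddef, mul_wd_apply, lm_coeff_one hhom hf]
        have hdsupp : ∀ w ∈ d.coeff.support, w ≤ M := by
          intro w hw
          obtain ⟨ω, hω, rfl⟩ := mul_wd_support hw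
          rw [hMt]
          refine mul_le_mul_right_word ?_ (le_lm hω) t
          rw [supp_wlen hhom hf hω, wlen_lm hhom hf]
        set c1' := c1 - e M • d with hc1'def
        have h1' : c1' ∈ Submodule.span K R * degSub K X m :=
          sub_mem h1 (Submodule.smul_mem _ _ hdK1)
        have hd1' : ∀ w ∈ c1'.coeff.support, w ≤ W := by
          intro w hw
          have := Finsupp.support_sub hw
          rw [Finset.mem_union] at this
          rcases this with h | h
          · exact hd1 w h
          · exact le_trans (hdsupp w (Finsupp.support_smul h)) hMle
        have hdW : d W = 0 := by
          rw [← Finsupp.notMem_support_iff]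
          intro hwd
          exact absurd (lt_of_le_of_lt (hdsupp W hwd) hMlt) (lt_irrefl W)
        have hc1' : c1' W = 1 := by
          rw [hc1'def, MonoidAlgebra.coeff_sub, Finsupp.sub_apply, MonoidAlgebra.coeff_smul_apply, hdW, smul_zero, sub_zero, hc1]
        have he' : c1' - c2 = e - e M • d := by
          rw [hc1'def, hedef]
          abel
        refine ih c1' c2 h1' h2 hd1' hd2 hc1' hc2 ?_
        rw [he']
        refine hcard' _ ?_ ?_
        · rw [MonoidAlgebra.coeff_sub, Finsupp.sub_apply, MonoidAlgebra.coeff_smul_apply, hdM, smul_eq_mul, mul_one, sub_self]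
        · intro w hw
          have := Finsupp.support_sub hw
          rw [Finset.mem_union] at this
          rcases this with h | h
          · exact le_lm h
          · exact hdsupp w (Finsupp.support_smul h)
      · obtain ⟨f, hf, t, hMt⟩ := hR
        rw [← hMdef] at hMt
        have htlen : wlen X t = m := by
          have := hMlen
          rw [hMt, wlen_mul, wlen_lm hhom hf] at this
          omega
        set d := wd K X t * f with hddef
        have hdK2 : d ∈ degSub K X m * Submodule.span K R :=
          Submodule.mul_mem_mul (wd_mem_degSub htlen) (Submodule.subset_span hf)
        have hdM : d M = 1 := by
          rw [hMt, hddef, wd_mul_apply, lm_coeff_one hhom hf]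
        have hdsupp : ∀ w ∈ d.coeff.support, w ≤ M := by
          intro w hw
          obtain ⟨ω, hω, rfl⟩ := wd_mul_support hw
          rw [hMt]
          exact mul_le_mul_left_word (le_lm hω) t
        set c2' := c2 + e M • d with hc2'def
        have h2' : c2' ∈ degSub K X m * Submodule.span K R :=
          add_mem h2 (Submodule.smul_mem _ _ hdK2)
        have hd2' : ∀ w ∈ c2'.coeff.support, w ≤ W := by
          intro w hw
          have := Finset.mem_union.mp (Finsupp.support_add hw)
          rcases this with h | h
          · exact hd2 w h
          · exact le_trans (hdsupp w (Finsupp.support_smul h)) hMle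
        have hdW : d W = 0 := by
          rw [← Finsupp.notMem_support_iff]
          intro hwd
          exact absurd (lt_of_le_of_lt (hdsupp W hwd) hMlt) (lt_irrefl W)
        have hc2' : c2' W = 1 := by
          rw [hc2'def, MonoidAlgebra.coeff_add, Finsupp.add_apply, MonoidAlgebra.coeff_smul_apply, hdW, smul_zero, add_zero, hc2]
        have he' : c1 - c2' = e - e M • d := by
          rw [hc2'def, hedef]
          abel
        refine ih c1 c2' h1 h2' hd1 hd2' hc1 hc2' ?_
        rw [he']
        refine hcard' _ ?_ ?_
        · rw [MonoidAlgebra.coeff_sub, Finsupp.sub_apply, MonoidAlgebra.coeff_smul_apply, hdM, smul_eq_mul, mul_one, sub_self]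
        · intro w hw
          have := Finsupp.support_sub hw
          rw [Finset.mem_union] at this
          rcases this with h | h
          · exact le_lm h
          · exact hdsupp w (Finsupp.support_smul h)

end S7
open CC in
/-- Suppose the reduced `N`-homogeneous presentation `⟨X|R⟩` is
extra-confluent.  Let `w₁` be a word, `w₂` a word of length `N−1`, and `x₁, x₂ ∈ X` such that
`w₁x₁` and `x₁w₂` are normal forms while `w₂x₂` is not a normal form.  Then `w₁x₁w₂` is a
normal form for `⟨X|R⟩`. -/
theorem stmt7 (K : Type*) [Field K] (X : Type*) [Fintype X] [LinearOrder X]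
    (N : ℕ) (hN : 2 ≤ N) (R : Set (F K X))
    (hhom : NHomogLC1 K X N R) (hred : Reduced K X R)
    (hside : SideConfluent K X N R) (hec : ExtraCondition K X N R)
    (w1 w2 : FreeMonoid X) (x1 x2 : X) (hlen : wlen X w2 = N - 1)
    (h1 : IsNormalForm K X R (wd K X (w1 * FreeMonoid.of x1)))
    (h2 : IsNormalForm K X R (wd K X (FreeMonoid.of x1 * w2)))
    (h3 : ¬ IsNormalForm K X R (wd K X (w2 * FreeMonoid.of x2))) :
    IsNormalForm K X R (wd K X (w1 * FreeMonoid.of x1 * w2)) := by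
  classical
  by_contra hbad
  obtain ⟨g', hg', u, v, hfac⟩ := (S7.wd_not_nf_iff hhom _).mp hbad
  have hfacL : (FreeMonoid.toList w1 ++ [x1]) ++ FreeMonoid.toList w2
      = (FreeMonoid.toList u ++ FreeMonoid.toList (lm K X g')) ++ FreeMonoid.toList v := by
    have h := congrArg FreeMonoid.toList hfac
    rw [FreeMonoid.toList_mul, FreeMonoid.toList_mul, FreeMonoid.toList_mul,
      FreeMonoid.toList_mul, FreeMonoid.toList_of] at h
    exact h
  have hβlen : (FreeMonoid.toList w2).length = N - 1 := hlen
  have hAlen : (FreeMonoid.toList (lm K X g')).length = N := S7.wlen_lm hhom hg'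
  have hlen0 : (FreeMonoid.toList w1).length + 1 + (FreeMonoid.toList w2).length
      = ((FreeMonoid.toList u).length + N) + (FreeMonoid.toList v).length := by
    have h := congrArg List.length hfacL
    simp only [List.length_append, List.length_cons, List.length_nil] at h
    rw [hAlen] at h
    omega
  by_cases hcase : (FreeMonoid.toList u).length + N ≤ (FreeMonoid.toList w1).length + 1
  · -- the occurrence lies inside w1·x1 : contradiction with h1
    set r := (FreeMonoid.toList w1).length + 1 - ((FreeMonoid.toList u).length + N) with hr
    have key : FreeMonoid.toList w1 ++ [x1]
        = (FreeMonoid.toList u ++ FreeMonoid.toList (lm K X g'))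
            ++ (FreeMonoid.toList v).take r := by
      have e1 : ((FreeMonoid.toList w1 ++ [x1]) ++ FreeMonoid.toList w2).take
          ((FreeMonoid.toList w1).length + 1) = FreeMonoid.toList w1 ++ [x1] :=
        List.take_left' (by simp)
      have e2 : ((FreeMonoid.toList u ++ FreeMonoid.toList (lm K X g'))
            ++ FreeMonoid.toList v).take
            ((FreeMonoid.toList u ++ FreeMonoid.toList (lm K X g')).length + r)
          = (FreeMonoid.toList u ++ FreeMonoid.toList (lm K X g'))
            ++ (FreeMonoid.toList v).take r := List.take_length_add_append r
      have e3 : (FreeMonoid.toList u ++ FreeMonoid.toList (lm K X g')).length + r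
          = (FreeMonoid.toList w1).length + 1 := by
        simp only [List.length_append]
        rw [hAlen]
        omega
      rw [← e1, hfacL, ← e2, e3]
    have hkey : w1 * FreeMonoid.of x1
        = u * lm K X g' * FreeMonoid.ofList ((FreeMonoid.toList v).take r) := by
      apply FreeMonoid.toList.injective
      rw [FreeMonoid.toList_mul, FreeMonoid.toList_mul, FreeMonoid.toList_mul,
        FreeMonoid.toList_of, FreeMonoid.toList_ofList]
      exact key
    exact absurd h1 ((S7.wd_not_nf_iff hhom _).mpr ⟨g', hg', u, _, hkey⟩)
  -- now the occurrence sticks out to the right of x1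
  push_neg at hcase
  have hile : (FreeMonoid.toList u).length ≤ (FreeMonoid.toList w1).length := by omega
  have hU : FreeMonoid.toList u
      = (FreeMonoid.toList w1).take (FreeMonoid.toList u).length := by
    have e1 : ((FreeMonoid.toList u ++ FreeMonoid.toList (lm K X g'))
        ++ FreeMonoid.toList v).take (FreeMonoid.toList u).length
        = FreeMonoid.toList u := by
      rw [List.append_assoc, List.take_left]
    have e2 : ((FreeMonoid.toList w1 ++ [x1]) ++ FreeMonoid.toList w2).take
        (FreeMonoid.toList u).length
        = (FreeMonoid.toList w1).take (FreeMonoid.toList u).length := by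
      rw [List.append_assoc, List.take_append_of_le_length hile]
    calc FreeMonoid.toList u
        = ((FreeMonoid.toList u ++ FreeMonoid.toList (lm K X g'))
            ++ FreeMonoid.toList v).take (FreeMonoid.toList u).length := e1.symm
      _ = ((FreeMonoid.toList w1 ++ [x1]) ++ FreeMonoid.toList w2).take
            (FreeMonoid.toList u).length := by rw [hfacL]
      _ = (FreeMonoid.toList w1).take (FreeMonoid.toList u).length := e2
  have hAV : FreeMonoid.toList (lm K X g') ++ FreeMonoid.toList v
      = (FreeMonoid.toList w1).drop (FreeMonoid.toList u).length
          ++ ([x1] ++ FreeMonoid.toList w2) := by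
    have e1 : ((FreeMonoid.toList u ++ FreeMonoid.toList (lm K X g'))
        ++ FreeMonoid.toList v).drop (FreeMonoid.toList u).length
        = FreeMonoid.toList (lm K X g') ++ FreeMonoid.toList v := by
      rw [List.append_assoc, List.drop_left]
    have e2 : ((FreeMonoid.toList w1 ++ [x1]) ++ FreeMonoid.toList w2).drop
        (FreeMonoid.toList u).length
        = (FreeMonoid.toList w1).drop (FreeMonoid.toList u).length
            ++ ([x1] ++ FreeMonoid.toList w2) := by
      rw [List.append_assoc, List.drop_append_of_le_length hile]
    calc FreeMonoid.toList (lm K X g') ++ FreeMonoid.toList v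
        = ((FreeMonoid.toList u ++ FreeMonoid.toList (lm K X g'))
            ++ FreeMonoid.toList v).drop (FreeMonoid.toList u).length := e1.symm
      _ = ((FreeMonoid.toList w1 ++ [x1]) ++ FreeMonoid.toList w2).drop
            (FreeMonoid.toList u).length := by rw [hfacL]
      _ = (FreeMonoid.toList w1).drop (FreeMonoid.toList u).length
            ++ ([x1] ++ FreeMonoid.toList w2) := e2
  by_cases hj0 : (FreeMonoid.toList u).length = (FreeMonoid.toList w1).length
  · -- j = 0 : the occurrence is exactly x1·w2, contradicting h2
    have hVnil : FreeMonoid.toList v = [] := by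
      apply List.length_eq_zero_iff.mp
      omega
    have hdropnil : (FreeMonoid.toList w1).drop (FreeMonoid.toList u).length = [] := by
      apply List.length_eq_zero_iff.mp
      rw [List.length_drop]
      omega
    have hA2 : FreeMonoid.toList (lm K X g') = [x1] ++ FreeMonoid.toList w2 := by
      rw [hVnil, List.append_nil] at hAV
      rw [hdropnil, List.nil_append] at hAV
      exact hAV
    have hlmg' : lm K X g' = FreeMonoid.of x1 * w2 := by
      apply FreeMonoid.toList.injective
      rw [FreeMonoid.toList_mul, FreeMonoid.toList_of]
      exact hA2
    exact absurd h2 ((S7.wd_not_nf_iff hhom _).mpr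
      ⟨g', hg', 1, 1, by rw [one_mul, mul_one, hlmg']⟩)
  -- main case : 1 ≤ j ≤ N − 2
  set i := (FreeMonoid.toList u).length with hidef
  set j := (FreeMonoid.toList w1).length - i with hjdef
  have hj1 : 1 ≤ j := by omega
  have hjN : j ≤ N - 2 := by omega
  set s' := FreeMonoid.ofList ((FreeMonoid.toList w1).drop i) with hs'def
  set p' := FreeMonoid.ofList ((FreeMonoid.toList w2).take (N - 1 - j)) with hp'def
  set q' := FreeMonoid.ofList ((FreeMonoid.toList w2).drop (N - 1 - j)) with hq'def
  have hs'len : wlen X s' = j := by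
    show ((FreeMonoid.toList s').length) = j
    rw [hs'def, FreeMonoid.toList_ofList, List.length_drop]
  have hp'len : wlen X p' = N - 1 - j := by
    show ((FreeMonoid.toList p').length) = N - 1 - j
    rw [hp'def, FreeMonoid.toList_ofList, List.length_take]
    omega
  have hq'len : wlen X q' = j := by
    show ((FreeMonoid.toList q').length) = j
    rw [hq'def, FreeMonoid.toList_ofList, List.length_drop]
    omega
  have hA : FreeMonoid.toList (lm K X g')
      = ((FreeMonoid.toList w1).drop i ++ [x1])
          ++ (FreeMonoid.toList w2).take (N - 1 - j) := by
    have e1 : (FreeMonoid.toList (lm K X g') ++ FreeMonoid.toList v).take N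
        = FreeMonoid.toList (lm K X g') := List.take_left' hAlen
    have e2 : (((FreeMonoid.toList w1).drop i ++ [x1]) ++ FreeMonoid.toList w2).take
          (((FreeMonoid.toList w1).drop i ++ [x1]).length + (N - 1 - j))
        = ((FreeMonoid.toList w1).drop i ++ [x1])
            ++ (FreeMonoid.toList w2).take (N - 1 - j) := List.take_length_add_append _
    have e3 : ((FreeMonoid.toList w1).drop i ++ [x1]).length + (N - 1 - j) = N := by
      simp only [List.length_append, List.length_cons, List.length_nil, List.length_drop]
      omega
    calc FreeMonoid.toList (lm K X g')
        = (FreeMonoid.toList (lm K X g') ++ FreeMonoid.toList v).take N := e1.symm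
      _ = ((FreeMonoid.toList w1).drop i ++ ([x1] ++ FreeMonoid.toList w2)).take N := by
          rw [hAV]
      _ = (((FreeMonoid.toList w1).drop i ++ [x1]) ++ FreeMonoid.toList w2).take N := by
          rw [List.append_assoc]
      _ = ((FreeMonoid.toList w1).drop i ++ [x1])
            ++ (FreeMonoid.toList w2).take (N - 1 - j) := by
          conv_lhs => rw [← e3]
          exact e2
  have hlmg' : lm K X g' = s' * FreeMonoid.of x1 * p' := by
    apply FreeMonoid.toList.injective
    rw [FreeMonoid.toList_mul, FreeMonoid.toList_mul, FreeMonoid.toList_of,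
      hs'def, hp'def, FreeMonoid.toList_ofList, FreeMonoid.toList_ofList]
    exact hA
  have hw2 : w2 = p' * q' := by
    apply FreeMonoid.toList.injective
    rw [FreeMonoid.toList_mul, hp'def, hq'def, FreeMonoid.toList_ofList,
      FreeMonoid.toList_ofList, List.take_append_drop]
  -- extract the relation g with leading monomial w2·x2
  obtain ⟨g, hg, u0, v0, hfac0⟩ := (S7.wd_not_nf_iff hhom _).mp h3
  have hlen3 : (FreeMonoid.toList u0).length + N + (FreeMonoid.toList v0).length
      = N - 1 + 1 := by
    have h := congrArg List.length (congrArg FreeMonoid.toList hfac0)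
    rw [FreeMonoid.toList_mul, FreeMonoid.toList_mul, FreeMonoid.toList_mul,
      FreeMonoid.toList_of] at h
    simp only [List.length_append, List.length_cons, List.length_nil] at h
    have hAlen2 : (FreeMonoid.toList (lm K X g)).length = N := S7.wlen_lm hhom hg
    rw [hAlen2, hβlen] at h
    omega
  have hu0 : u0 = 1 := by
    apply FreeMonoid.toList.injective
    rw [FreeMonoid.toList_one]
    apply List.length_eq_zero_iff.mp
    omega
  have hv0 : v0 = 1 := by
    apply FreeMonoid.toList.injective
    rw [FreeMonoid.toList_one]
    apply List.length_eq_zero_iff.mp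
    omega
  have hlmg : lm K X g = w2 * FreeMonoid.of x2 := by
    rw [hfac0, hu0, hv0, one_mul, mul_one]
  -- side-confluence at m = j + 1
  obtain ⟨k, hk1, heq⟩ := hside (j + 1) (by omega) (by omega)
  set W : FreeMonoid X := (s' * FreeMonoid.of x1) * (w2 * FreeMonoid.of x2) with hWdef
  have hx1len : wlen X (FreeMonoid.of x1 : FreeMonoid X) = 1 := rfl
  have hx2len : wlen X (FreeMonoid.of x2 : FreeMonoid X) = 1 := rfl
  have hsx1len : wlen X (s' * FreeMonoid.of x1) = j + 1 := by
    rw [S7.wlen_mul, hs'len, hx1len]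
  have hqx2len : wlen X (q' * FreeMonoid.of x2) = j + 1 := by
    rw [S7.wlen_mul, hq'len, hx2len]
  have hw2x2len : wlen X (w2 * FreeMonoid.of x2) = N := by
    rw [S7.wlen_mul, hlen, hx2len]
    omega
  have hW1 : W = lm K X g' * (q' * FreeMonoid.of x2) := by
    rw [hWdef, hlmg', hw2]
    simp only [mul_assoc]
  have hW2 : W = (s' * FreeMonoid.of x1) * lm K X g := by rw [hWdef, hlmg]
  set c1 : F K X := g' * wd K X (q' * FreeMonoid.of x2) with hc1def
  set c2 : F K X := wd K X (s' * FreeMonoid.of x1) * g with hc2def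
  have hc1K : c1 ∈ Submodule.span K R * degSub K X (j + 1) :=
    Submodule.mul_mem_mul (Submodule.subset_span hg') (S7.wd_mem_degSub hqx2len)
  have hc2K : c2 ∈ degSub K X (j + 1) * Submodule.span K R :=
    Submodule.mul_mem_mul (S7.wd_mem_degSub hsx1len) (Submodule.subset_span hg)
  have hc1W : c1 W = 1 := by
    rw [hW1, hc1def, S7.mul_wd_apply, S7.lm_coeff_one hhom hg']
  have hc2W : c2 W = 1 := by
    rw [hW2, hc2def, S7.wd_mul_apply, S7.lm_coeff_one hhom hg]
  have hc1supp : ∀ w ∈ c1.coeff.support, w ≤ W := by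
    intro w hw
    obtain ⟨ω, hω, rfl⟩ := S7.mul_wd_support hw
    rw [hW1]
    refine S7.mul_le_mul_right_word ?_ (S7.le_lm hω) _
    rw [S7.supp_wlen hhom hg' hω, S7.wlen_lm hhom hg']
  have hc2supp : ∀ w ∈ c2.coeff.support, w ≤ W := by
    intro w hw
    obtain ⟨ω, hω, rfl⟩ := S7.wd_mul_support hw
    rw [hW2]
    exact S7.mul_le_mul_left_word (S7.le_lm hω) _
  obtain ⟨c, hcK1, hcK2, hcW, hcsupp⟩ :=
    S7.zig hhom hred hk1 heq (by omega)
      ((S7.allWords X (N + (j + 1))).filter (fun w => w ≤ lm K X (c1 - c2))).card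
      c1 c2 hc1K hc2K hc1supp hc2supp hc1W hc2W le_rfl
  have hcmid : c ∈ degSub K X j * Submodule.span K R * degSub K X 1 := by
    have := hec (j + 1) (by omega) (by omega) (Submodule.mem_inf.mpr ⟨hcK2, hcK1⟩)
    simpa using this
  have h0 : S7.applyMid (Sop K X R) j N 1 c = 0 :=
    S7.applyMid_kills hhom hred j 1 hcmid
  by_cases hex : ∃ f ∈ R, ∃ u' v' : FreeMonoid X, wlen X u' = j ∧ W = u' * lm K X f * v'
  · obtain ⟨f, hf, u', v', hu'len, hWf⟩ := hex
    have hWfL : (FreeMonoid.toList s' ++ [x1]) ++ (FreeMonoid.toList w2 ++ [x2])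
        = (FreeMonoid.toList u' ++ FreeMonoid.toList (lm K X f)) ++ FreeMonoid.toList v' := by
      have h := congrArg FreeMonoid.toList hWf
      rw [hWdef] at h
      rw [FreeMonoid.toList_mul, FreeMonoid.toList_mul, FreeMonoid.toList_mul,
        FreeMonoid.toList_mul, FreeMonoid.toList_mul, FreeMonoid.toList_of,
        FreeMonoid.toList_of] at h
      exact h
    have hu'l : (FreeMonoid.toList u').length = j := hu'len
    have hAflen : (FreeMonoid.toList (lm K X f)).length = N := S7.wlen_lm hhom hf
    have hs'l : (FreeMonoid.toList s').length = j := hs'len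
    have htail : [x1] ++ (FreeMonoid.toList w2 ++ [x2])
        = FreeMonoid.toList (lm K X f) ++ FreeMonoid.toList v' := by
      have e1 : ((FreeMonoid.toList s' ++ [x1]) ++ (FreeMonoid.toList w2 ++ [x2])).drop j
          = [x1] ++ (FreeMonoid.toList w2 ++ [x2]) := by
        rw [List.append_assoc, List.drop_left' hs'l]
      have e2 : ((FreeMonoid.toList u' ++ FreeMonoid.toList (lm K X f))
            ++ FreeMonoid.toList v').drop j
          = FreeMonoid.toList (lm K X f) ++ FreeMonoid.toList v' := by
        rw [List.append_assoc, List.drop_left' hu'l]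
      rw [← e1, hWfL, e2]
    have hAf : FreeMonoid.toList (lm K X f) = [x1] ++ FreeMonoid.toList w2 := by
      have e1 : (FreeMonoid.toList (lm K X f) ++ FreeMonoid.toList v').take N
          = FreeMonoid.toList (lm K X f) := List.take_left' hAflen
      have e2 : (([x1] ++ FreeMonoid.toList w2) ++ [x2]).take N
          = [x1] ++ FreeMonoid.toList w2 := List.take_left' (by
            simp only [List.length_append, List.length_cons, List.length_nil]
            omega)
      calc FreeMonoid.toList (lm K X f)
          = (FreeMonoid.toList (lm K X f) ++ FreeMonoid.toList v').take N := e1.symm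
        _ = ([x1] ++ (FreeMonoid.toList w2 ++ [x2])).take N := by rw [← htail]
        _ = (([x1] ++ FreeMonoid.toList w2) ++ [x2]).take N := by rw [List.append_assoc]
        _ = [x1] ++ FreeMonoid.toList w2 := e2
    have hlmf : lm K X f = FreeMonoid.of x1 * w2 := by
      apply FreeMonoid.toList.injective
      rw [FreeMonoid.toList_mul, FreeMonoid.toList_of]
      exact hAf
    exact absurd h2 ((S7.wd_not_nf_iff hhom _).mpr
      ⟨f, hf, 1, 1, by rw [one_mul, mul_one, hlmf]⟩)
  · have hfixW : S7.applyMid (Sop K X R) j N 1 (wd K X W) = wd K X W :=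
      S7.fix_applyMid hex
    have hco := S7.coeff_good (S7.good_applyMid hhom hred j 1) hfixW hcsupp
    rw [h0, hcW] at hco
    simp at hco
end
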